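/- arXiv:1403.3277 — 4 statements merged into one kernel-verified Lean document; each statement's English description precedes it below -/
import Mathlib

section
/- If d is a finitely generated metric on a group G, then d is two-sided invariant, i.e. d(g·x·h, g·y·h) = d(x,y) for all g,h,x,y ∈ G. -/
open Monoid

/-- A (real-valued) metric on a type. -/
def IsMetricD {α : Type*} (d : α → α → ℝ) : Prop :=
  (∀ x y, d x y = 0 ↔ x = y) ∧ (∀ x y, d x y = d y x) ∧
  (∀ x y z, d x z ≤ d x y + d y z)

/-- Two-sided invariance of a distance function on a group. -/
def IsBiInvariant {G : Type*} [Group G] (d : G → G → ℝ) : Prop :=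
  ∀ g h x y : G, d (g * x * h) (g * y * h) = d x y

/-- A finitely generated metric on a group, with generating set `A`. -/
def IsFinGenMetric {G : Type*} [Group G] (d : G → G → ℝ) (A : Set G) : Prop :=
  A.Finite ∧ (1 : G) ∈ A ∧ (∀ a ∈ A, a⁻¹ ∈ A) ∧
  ∀ a b : G, IsLeast { r | ∃ l m : List G, l.length = m.length ∧
    (∀ x ∈ l, x ∈ A) ∧ (∀ y ∈ m, y ∈ A) ∧ l.prod = a ∧ m.prod = b ∧
    r = (List.zipWith d l m).sum } (d a b)

/-- Fact 3. Every finitely generated metric on a group is two-sided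
invariant. -/
theorem finGenMetric_biInvariant {G : Type*} [Group G] (d : G → G → ℝ) (A : Set G)
    (hm : IsMetricD d) (hfg : IsFinGenMetric d A) : IsBiInvariant d := by
  obtain ⟨hfin, h1, hinvA, hL⟩ := hfg
  have key : ∀ g h x y : G, d (g * x * h) (g * y * h) ≤ d x y := by
    intro g h x y
    obtain ⟨⟨l, m, hlm, hlA, hmA, hlp, hmp, hsum⟩, _⟩ := hL x y
    obtain ⟨⟨p, q, hpq, hpA, hqA, hpp, hqp, hpsum⟩, _⟩ := hL g g
    obtain ⟨⟨r, s, hrs, hrA, hsA, hrp, hsp, hrsum⟩, _⟩ := hL h h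
    have hgg : d g g = 0 := (hm.1 g g).mpr rfl
    have hhh : d h h = 0 := (hm.1 h h).mpr rfl
    have hmem : d x y ∈ { t | ∃ l' m' : List G, l'.length = m'.length ∧
        (∀ x ∈ l', x ∈ A) ∧ (∀ y ∈ m', y ∈ A) ∧ l'.prod = g * x * h ∧ m'.prod = g * y * h ∧
        t = (List.zipWith d l' m').sum } := by
      refine ⟨p ++ l ++ r, q ++ m ++ s, by simp [hlm, hpq, hrs], ?_, ?_, ?_, ?_, ?_⟩
      · intro z hz; simp only [List.mem_append] at hz
        rcases hz with (hz | hz) | hz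
        exacts [hpA z hz, hlA z hz, hrA z hz]
      · intro z hz; simp only [List.mem_append] at hz
        rcases hz with (hz | hz) | hz
        exacts [hqA z hz, hmA z hz, hsA z hz]
      · simp [List.prod_append, hpp, hlp, hrp, mul_assoc]
      · simp [List.prod_append, hqp, hmp, hsp, mul_assoc]
      · rw [List.zipWith_append (by simp [hpq, hlm]),
          List.zipWith_append hpq, List.sum_append, List.sum_append,
          ← hpsum, ← hrsum, ← hsum, hgg, hhh]
        ring
    exact (hL (g * x * h) (g * y * h)).2 hmem
  intro g h x y
  refine le_antisymm (key g h x y) ?_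
  have := key g⁻¹ h⁻¹ (g * x * h) (g * y * h)
  calc d x y = d (g⁻¹ * (g * x * h) * h⁻¹) (g⁻¹ * (g * y * h) * h⁻¹) := by group
    _ ≤ d (g * x * h) (g * y * h) := this
end

section
/- For every g in the free product G ∗ F(X), δ(g,1) = inf{ ρ(w,u) : w,u words over S of equal length with w' = g, u' = 1, and w irreducible }. That is, in computing δ(g,1) one may restrict the word representing g to be irreducible. -/
open Monoid

/-- The free product `G ∗ F(X)`. -/
abbrev FP (G X : Type*) [Group G] := Monoid.Coprod G (FreeGroup X)

/-- The alphabet `S = G ⊔ X ⊔ X⁻¹`. -/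
abbrev Alphabet (G X : Type*) := G ⊕ (X ⊕ X)

/-- Canonical image of a letter in the free product. -/
def toFP {G X : Type*} [Group G] : Alphabet G X → FP G X
  | Sum.inl g => Coprod.inl g
  | Sum.inr (Sum.inl x) => Coprod.inr (FreeGroup.of x)
  | Sum.inr (Sum.inr x) => (Coprod.inr (FreeGroup.of x) : FP G X)⁻¹

/-- For a word `w` over `S`, `wordProd w` is `w'`, the product of the images of its letters. -/
def wordProd {G X : Type*} [Group G] (w : List (Alphabet G X)) : FP G X :=
  (w.map toFP).prod

/-- `ρ(v,w) = d(v₁,w₁) + … + d(vₙ,wₙ)`. -/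
def rho {α : Type*} (d : α → α → ℝ) (v w : List α) : ℝ :=
  (List.zipWith d v w).sum

/-- The Graev pre-metric `δ` on the free product. -/
noncomputable def graevDelta {G X : Type*} [Group G]
    (d : Alphabet G X → Alphabet G X → ℝ) (u v : FP G X) : ℝ :=
  sInf { r | ∃ w₁ w₂ : List (Alphabet G X), w₁.length = w₂.length ∧
    wordProd w₁ = u ∧ wordProd w₂ = v ∧ r = rho d w₁ w₂ }

/-- The extension `d` of `d'` from `G ⊔ X` to `S = G ⊔ X ⊔ X⁻¹`. -/
noncomputable def extD {G X : Type*} [Group G] (d' : (G ⊕ X) → (G ⊕ X) → ℝ) :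
    Alphabet G X → Alphabet G X → ℝ
  | Sum.inl g, Sum.inl h => d' (Sum.inl g) (Sum.inl h)
  | Sum.inl g, Sum.inr (Sum.inl x) => d' (Sum.inl g) (Sum.inr x)
  | Sum.inr (Sum.inl x), Sum.inl g => d' (Sum.inr x) (Sum.inl g)
  | Sum.inr (Sum.inl x), Sum.inr (Sum.inl y) => d' (Sum.inr x) (Sum.inr y)
  | Sum.inl g, Sum.inr (Sum.inr x) => d' (Sum.inl g⁻¹) (Sum.inr x)
  | Sum.inr (Sum.inr x), Sum.inl g => d' (Sum.inr x) (Sum.inl g⁻¹)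
  | Sum.inr (Sum.inr x), Sum.inr (Sum.inr y) => d' (Sum.inr x) (Sum.inr y)
  | Sum.inr (Sum.inl x), Sum.inr (Sum.inr y) =>
      sInf { r | ∃ c : G, r = d' (Sum.inr x) (Sum.inl c) + d' (Sum.inl c⁻¹) (Sum.inr y) }
  | Sum.inr (Sum.inr x), Sum.inr (Sum.inl y) =>
      sInf { r | ∃ c : G, r = d' (Sum.inr y) (Sum.inl c) + d' (Sum.inl c⁻¹) (Sum.inr x) }

/-- Formal inverse of a letter of `S`. -/
def formalInv {G X : Type*} [Group G] : Alphabet G X → Alphabet G X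
  | Sum.inl g => Sum.inl g⁻¹
  | Sum.inr (Sum.inl x) => Sum.inr (Sum.inr x)
  | Sum.inr (Sum.inr x) => Sum.inr (Sum.inl x)

/-- Admissible adjacent pair in an irreducible word. -/
def okPair {G X : Type*} [Group G] : Alphabet G X → Alphabet G X → Prop
  | Sum.inl _, Sum.inl _ => False
  | Sum.inr x, Sum.inr y => Sum.inr y ≠ formalInv (Sum.inr x : Alphabet G X)
  | _, _ => True

/-- A word over `S` is irreducible if no two adjacent letters lie in `G`
and no two adjacent letters of `X ⊔ X⁻¹` are mutually inverse. -/
def IsIrreducibleWord {G X : Type*} [Group G] (w : List (Alphabet G X)) : Prop :=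
  List.Chain' okPair w

set_option linter.unusedSectionVars false
set_option linter.unusedVariables false
set_option maxHeartbeats 1000000

section Aux
variable {G X : Type*} [Group G] {d' : (G ⊕ X) → (G ⊕ X) → ℝ} {dG : G → G → ℝ}

lemma dp_nonneg (h' : IsMetricD d') (a b : G ⊕ X) : 0 ≤ d' a b := by
  have h1 := h'.2.2 a b a
  have h2 := (h'.1 a a).2 rfl
  have h3 := h'.2.1 a b
  linarith

lemma dinv (h' : IsMetricD d') (hGinv : IsBiInvariant dG) (hG : IsMetricD dG)
    (hextG : ∀ g h : G, d' (Sum.inl g) (Sum.inl h) = dG g h) (g h : G) :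
    d' (Sum.inl g⁻¹) (Sum.inl h⁻¹) = d' (Sum.inl g) (Sum.inl h) := by
  rw [hextG, hextG]
  have h2 : dG (g⁻¹ * g * h⁻¹) (g⁻¹ * h * h⁻¹) = dG g h := hGinv g⁻¹ h⁻¹ g h
  simp only [inv_mul_cancel, one_mul, mul_inv_cancel] at h2
  rw [hG.2.1 g⁻¹ h⁻¹]
  rw [← h2]
  congr 1 <;> group

lemma sInf_set_nonempty (x : X) (y : X) :
    Set.Nonempty { r | ∃ c : G, r = d' (Sum.inr x) (Sum.inl c) + d' (Sum.inl c⁻¹) (Sum.inr y) } :=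
  ⟨_, 1, rfl⟩

lemma sInf_set_bdd (h' : IsMetricD d') (x : X) (y : X) :
    BddBelow { r | ∃ c : G, r = d' (Sum.inr x) (Sum.inl c) + d' (Sum.inl c⁻¹) (Sum.inr y) } := by
  refine ⟨0, fun r hr => ?_⟩
  obtain ⟨c, rfl⟩ := hr
  have := dp_nonneg h' (Sum.inr x : G ⊕ X) (Sum.inl c)
  have := dp_nonneg h' (Sum.inl c⁻¹ : G ⊕ X) (Sum.inr y)
  linarith

lemma extD_nonneg (h' : IsMetricD d') (a b : G ⊕ (X ⊕ X)) : 0 ≤ extD d' a b := by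
  rcases a with g | x | x <;> rcases b with h | y | y <;> simp only [extD] <;>
    first
      | exact dp_nonneg h' _ _
      | (apply Real.sInf_nonneg
         rintro r ⟨c, rfl⟩
         have h1 := dp_nonneg h' (Sum.inr x : G ⊕ X) (Sum.inl c)
         have h2 := dp_nonneg h' (Sum.inl c⁻¹ : G ⊕ X) (Sum.inr y)
         have h3 := dp_nonneg h' (Sum.inr y : G ⊕ X) (Sum.inl c)
         have h4 := dp_nonneg h' (Sum.inl c⁻¹ : G ⊕ X) (Sum.inr x)
         linarith)

lemma extD_symm (h' : IsMetricD d') (a b : G ⊕ (X ⊕ X)) :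
    extD d' a b = extD d' b a := by
  rcases a with g | x | x <;> rcases b with h | y | y <;> simp only [extD] <;>
    first | rfl | exact h'.2.1 _ _

@[simp] lemma formalInv_formalInv (a : G ⊕ (X ⊕ X)) : formalInv (formalInv a) = a := by
  rcases a with g | x | x <;> simp [formalInv]

lemma extD_fInv (h' : IsMetricD d') (hGinv : IsBiInvariant dG) (hG : IsMetricD dG)
    (hextG : ∀ g h : G, d' (Sum.inl g) (Sum.inl h) = dG g h) (a b : G ⊕ (X ⊕ X)) :
    extD d' (formalInv a) (formalInv b) = extD d' a b := by
  rcases a with g | x | x <;> rcases b with h | y | y <;>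
      simp only [formalInv, extD, inv_inv] <;>
    first
      | rfl
      | exact dinv h' hGinv hG hextG _ _
      | (congr 1
         ext r
         constructor
         · rintro ⟨c, rfl⟩
           exact ⟨c⁻¹, by rw [inv_inv, h'.2.1 (Sum.inr _) (Sum.inl c), add_comm,
             h'.2.1 (Sum.inl c⁻¹) (Sum.inr _)]⟩
         · rintro ⟨c, rfl⟩
           exact ⟨c⁻¹, by rw [inv_inv, h'.2.1 (Sum.inr _) (Sum.inl c), add_comm,
             h'.2.1 (Sum.inl c⁻¹) (Sum.inr _)]⟩)

lemma extD_self_X (h' : IsMetricD d') (v : X ⊕ X) :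
    extD d' (Sum.inr v : G ⊕ (X ⊕ X)) (Sum.inr v) = 0 := by
  rcases v with x | x <;> simp only [extD] <;> exact (h'.1 _ _).2 rfl

end Aux

section Tri
variable {G X : Type*} [Group G] {d' : (G ⊕ X) → (G ⊕ X) → ℝ} {dG : G → G → ℝ}

lemma le_add_sInf' {S : Set ℝ} {A K : ℝ} (hne : S.Nonempty) (h : ∀ s ∈ S, A ≤ K + s) :
    A ≤ K + sInf S := by
  have : A - K ≤ sInf S := le_csInf hne fun s hs => by linarith [h s hs]
  linarith

lemma sInf_le_add' {T S : Set ℝ} {K : ℝ} (hbdd : BddBelow T) (hne : S.Nonempty)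
    (h : ∀ s ∈ S, ∃ t ∈ T, t ≤ K + s) : sInf T ≤ K + sInf S := by
  have : sInf T - K ≤ sInf S := le_csInf hne fun s hs => by
    obtain ⟨t, ht, hle⟩ := h s hs
    have := csInf_le hbdd ht
    linarith
  linarith

lemma le_sInf_add_sInf' {S₁ S₂ : Set ℝ} {A : ℝ} (hne₁ : S₁.Nonempty) (hne₂ : S₂.Nonempty)
    (h : ∀ s ∈ S₁, ∀ t ∈ S₂, A ≤ s + t) : A ≤ sInf S₁ + sInf S₂ := by
  have : A - sInf S₂ ≤ sInf S₁ := le_csInf hne₁ fun s hs => by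
    have : A - s ≤ sInf S₂ := le_csInf hne₂ fun t ht => by linarith [h s hs t ht]
    linarith
  linarith

lemma tri_midXpos (h' : IsMetricD d') (hGinv : IsBiInvariant dG) (hG : IsMetricD dG)
    (hextG : ∀ g h : G, d' (Sum.inl g) (Sum.inl h) = dG g h)
    (a c : G ⊕ (X ⊕ X)) (y : X) :
    extD d' a c ≤ extD d' a (Sum.inr (Sum.inl y)) + extD d' (Sum.inr (Sum.inl y)) c := by
  have dsymm := h'.2.1
  have dtri := h'.2.2
  have hdinv := dinv h' hGinv hG hextG
  rcases a with g | x | x <;> rcases c with h | z | z <;> simp only [extD]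
  · exact dtri _ _ _
  · exact dtri _ _ _
  · -- inl g, z⁻¹
    refine le_add_sInf' (sInf_set_nonempty y z) ?_
    rintro s ⟨c, rfl⟩
    have t1 : d' (Sum.inl g⁻¹) (Sum.inr z) ≤
        d' (Sum.inl g⁻¹) (Sum.inl c⁻¹) + d' (Sum.inl c⁻¹) (Sum.inr z) := dtri _ _ _
    have t2 : d' (Sum.inl g⁻¹) (Sum.inl c⁻¹) = d' (Sum.inl g) (Sum.inl c) := hdinv g c
    have t3 : d' (Sum.inl g) (Sum.inl c) ≤
        d' (Sum.inl g) (Sum.inr y) + d' (Sum.inr y) (Sum.inl c) := dtri _ _ _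
    linarith
  · exact dtri _ _ _
  · exact dtri _ _ _
  · -- x⁺, z⁻
    refine sInf_le_add' (sInf_set_bdd h' x z) (sInf_set_nonempty y z) ?_
    rintro s ⟨c, rfl⟩
    refine ⟨_, ⟨c, rfl⟩, ?_⟩
    have t1 : d' (Sum.inr x) (Sum.inl c) ≤
        d' (Sum.inr x) (Sum.inr y) + d' (Sum.inr y) (Sum.inl c) := dtri _ _ _
    linarith
  · -- x⁻, inl h
    rw [add_comm]
    refine le_add_sInf' (sInf_set_nonempty y x) ?_
    rintro s ⟨c, rfl⟩
    have t1 : d' (Sum.inr x) (Sum.inl h⁻¹) ≤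
        d' (Sum.inr x) (Sum.inl c⁻¹) + d' (Sum.inl c⁻¹) (Sum.inl h⁻¹) := dtri _ _ _
    have t2 : d' (Sum.inl c⁻¹) (Sum.inl h⁻¹) = d' (Sum.inl c) (Sum.inl h) := hdinv c h
    have t3 : d' (Sum.inl c) (Sum.inl h) ≤
        d' (Sum.inl c) (Sum.inr y) + d' (Sum.inr y) (Sum.inl h) := dtri _ _ _
    have t4 : d' (Sum.inr x) (Sum.inl c⁻¹) = d' (Sum.inl c⁻¹) (Sum.inr x) := dsymm _ _
    have t5 : d' (Sum.inl c) (Sum.inr y) = d' (Sum.inr y) (Sum.inl c) := dsymm _ _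
    linarith
  · -- x⁻, z⁺
    rw [add_comm]
    refine sInf_le_add' (sInf_set_bdd h' z x) (sInf_set_nonempty y x) ?_
    rintro s ⟨c, rfl⟩
    refine ⟨_, ⟨c, rfl⟩, ?_⟩
    have t1 : d' (Sum.inr z) (Sum.inl c) ≤
        d' (Sum.inr z) (Sum.inr y) + d' (Sum.inr y) (Sum.inl c) := dtri _ _ _
    have t2 : d' (Sum.inr z) (Sum.inr y) = d' (Sum.inr y) (Sum.inr z) := dsymm _ _
    linarith
  · -- x⁻, z⁻
    refine le_sInf_add_sInf' (sInf_set_nonempty y x) (sInf_set_nonempty y z) ?_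
    rintro s ⟨c, rfl⟩ t ⟨e, rfl⟩
    have t1 : d' (Sum.inr x) (Sum.inr z) ≤
        d' (Sum.inr x) (Sum.inl c⁻¹) + d' (Sum.inl c⁻¹) (Sum.inr z) := dtri _ _ _
    have t2 : d' (Sum.inl c⁻¹) (Sum.inr z) ≤
        d' (Sum.inl c⁻¹) (Sum.inl e⁻¹) + d' (Sum.inl e⁻¹) (Sum.inr z) := dtri _ _ _
    have t3 : d' (Sum.inl c⁻¹) (Sum.inl e⁻¹) = d' (Sum.inl c) (Sum.inl e) := hdinv c e
    have t4 : d' (Sum.inl c) (Sum.inl e) ≤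
        d' (Sum.inl c) (Sum.inr y) + d' (Sum.inr y) (Sum.inl e) := dtri _ _ _
    have t5 : d' (Sum.inr x) (Sum.inl c⁻¹) = d' (Sum.inl c⁻¹) (Sum.inr x) := dsymm _ _
    have t6 : d' (Sum.inl c) (Sum.inr y) = d' (Sum.inr y) (Sum.inl c) := dsymm _ _
    linarith

lemma tri_midX (h' : IsMetricD d') (hGinv : IsBiInvariant dG) (hG : IsMetricD dG)
    (hextG : ∀ g h : G, d' (Sum.inl g) (Sum.inl h) = dG g h)
    (a c : G ⊕ (X ⊕ X)) (v : X ⊕ X) :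
    extD d' a c ≤ extD d' a (Sum.inr v) + extD d' (Sum.inr v) c := by
  rcases v with y | y
  · exact tri_midXpos h' hGinv hG hextG a c y
  · have h1 : extD d' a c = extD d' (formalInv a) (formalInv c) :=
      (extD_fInv h' hGinv hG hextG a c).symm
    have h2 : extD d' a (Sum.inr (Sum.inr y)) =
        extD d' (formalInv a) (Sum.inr (Sum.inl y)) := by
      rw [← extD_fInv h' hGinv hG hextG a (Sum.inr (Sum.inr y))]; rfl
    have h3 : extD d' (Sum.inr (Sum.inr y)) c =
        extD d' (Sum.inr (Sum.inl y)) (formalInv c) := by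
      rw [← extD_fInv h' hGinv hG hextG (Sum.inr (Sum.inr y)) c]; rfl
    rw [h1, h2, h3]
    exact tri_midXpos h' hGinv hG hextG _ _ y

end Tri


section Words
variable {G X : Type*} [Group G]

@[simp] lemma wordProd_nil : wordProd ([] : List (Alphabet G X)) = 1 := rfl

lemma wordProd_cons (a : Alphabet G X) (w : List (Alphabet G X)) :
    wordProd (a :: w) = toFP a * wordProd w := by simp [wordProd]

lemma wordProd_append (v w : List (Alphabet G X)) :
    wordProd (v ++ w) = wordProd v * wordProd w := by simp [wordProd]

lemma toFP_formalInv (a : Alphabet G X) : toFP (formalInv a) = (toFP a)⁻¹ := by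
  rcases a with g | x | x <;> simp [toFP, formalInv]

lemma wordProd_middle_pair (A B : List (Alphabet G X)) (z : Alphabet G X) :
    wordProd (A ++ z :: formalInv z :: B) = wordProd (A ++ B) := by
  rw [wordProd_append, wordProd_append, wordProd_cons, wordProd_cons, toFP_formalInv,
    mul_inv_cancel_left]

end Words

section RhoL
variable {α : Type*} {d : α → α → ℝ}

lemma rho_cons (a b : α) (v w : List α) : rho d (a :: v) (b :: w) = d a b + rho d v w := by
  simp [rho]

lemma rho_append {v₁ w₁ : List α} (v₂ w₂ : List α) (h : v₁.length = w₁.length) :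
    rho d (v₁ ++ v₂) (w₁ ++ w₂) = rho d v₁ w₁ + rho d v₂ w₂ := by
  unfold rho
  rw [List.zipWith_append h, List.sum_append]

lemma rho_nonneg (hd : ∀ a b, 0 ≤ d a b) : ∀ (v w : List α), 0 ≤ rho d v w := by
  intro v
  induction v with
  | nil => intro w; simp [rho]
  | cons a v ih =>
    intro w
    cases w with
    | nil => simp [rho]
    | cons b w => rw [rho_cons]; have := hd a b; have := ih w; linarith

end RhoL

section ListH
variable {α : Type*}

lemma helper3' {A B B₁ B₂ : List α} {m : α} (h : A ++ B = B₁ ++ m :: B₂) :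
    (∃ P₂, A = B₁ ++ m :: P₂ ∧ B₂ = P₂ ++ B) ∨
    (∃ P₁, B₁ = A ++ P₁ ∧ B = P₁ ++ m :: B₂) := by
  rcases List.append_eq_append_iff.1 h with ⟨a', ha1, ha2⟩ | ⟨c', hc1, hc2⟩
  · exact Or.inr ⟨a', ha1, ha2⟩
  · cases c' with
    | nil => exact Or.inr ⟨[], by simpa using hc1.symm, by simpa using hc2.symm⟩
    | cons m' P₂ =>
      rw [List.cons_append] at hc2
      injection hc2 with h1 h2
      subst h1
      exact Or.inl ⟨P₂, hc1, h2⟩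

lemma split1 : ∀ (u : List α) (n : ℕ), n < u.length →
    ∃ A a B, u = A ++ a :: B ∧ A.length = n := by
  intro u
  induction u with
  | nil => intro n h; simp at h
  | cons x t ih =>
    intro n h
    cases n with
    | zero => exact ⟨[], x, t, rfl, rfl⟩
    | succ n =>
      obtain ⟨A, a, B, h1, h2⟩ := ih n (by simpa using Nat.lt_of_succ_lt_succ h)
      exact ⟨x :: A, a, B, by simp [h1], by simp [h2]⟩

lemma chain'_break (R : α → α → Prop) :
    ∀ (l : List α), ¬ List.Chain' R l → ∃ A a b B, l = A ++ a :: b :: B ∧ ¬ R a b := by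
  intro l
  induction l with
  | nil => intro h; exact absurd List.isChain_nil h
  | cons x t ih =>
    intro h
    cases t with
    | nil => exact absurd (List.isChain_singleton x) h
    | cons y s =>
      by_cases hxy : R x y
      · have : ¬ List.Chain' R (y :: s) := fun hc => h (List.isChain_cons_cons.2 ⟨hxy, hc⟩)
        obtain ⟨A, a, b, B, h1, h2⟩ := ih this
        exact ⟨x :: A, a, b, B, by simp [h1], h2⟩
      · exact ⟨[], x, y, s, rfl, hxy⟩

end ListH

section GMoves
variable {G X : Type*} [Group G] {d' : (G ⊕ X) → (G ⊕ X) → ℝ} {dG : G → G → ℝ}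

lemma dlemM1 (h' : IsMetricD d') (hGinv : IsBiInvariant dG) (hG : IsMetricD dG)
    (hextG : ∀ g h : G, d' (Sum.inl g) (Sum.inl h) = dG g h) (g₁ g₂ a b : G) :
    extD d' (Sum.inl (g₁*g₂)) (Sum.inl (a*b)) ≤
      extD d' (Sum.inl g₁) (Sum.inl a) + extD d' (Sum.inl g₂) (Sum.inl b) := by
  simp only [extD]
  rw [hextG, hextG, hextG]
  have t1 : dG (g₁*g₂) (a*b) ≤ dG (g₁*g₂) (a*g₂) + dG (a*g₂) (a*b) := hG.2.2 _ _ _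
  have t2 : dG (1*g₁*g₂) (1*a*g₂) = dG g₁ a := hGinv 1 g₂ g₁ a
  have t3 : dG (a*g₂*1) (a*b*1) = dG g₂ b := hGinv a 1 g₂ b
  simp only [one_mul, mul_one] at t2 t3
  linarith

lemma dlemM3 (h' : IsMetricD d') (hGinv : IsBiInvariant dG) (hG : IsMetricD dG)
    (hextG : ∀ g h : G, d' (Sum.inl g) (Sum.inl h) = dG g h) (v : X ⊕ X) (a b : G) :
    extD d' (Sum.inl 1) (Sum.inl (a*b)) ≤
      extD d' (Sum.inr v) (Sum.inl a) + extD d' (formalInv (Sum.inr v)) (Sum.inl b) := by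
  have key : d' (Sum.inl 1) (Sum.inl (a*b)) = d' (Sum.inl a⁻¹) (Sum.inl b) := by
    rw [hextG, hextG]
    have := hGinv a 1 a⁻¹ b
    simp only [mul_one, mul_inv_cancel] at this
    exact this
  have key2 : d' (Sum.inl a⁻¹) (Sum.inl b) = d' (Sum.inl a) (Sum.inl b⁻¹) := by
    have := dinv h' hGinv hG hextG a⁻¹ b
    rw [inv_inv] at this
    exact this.symm
  rcases v with y | y <;> simp only [extD, formalInv]
  · rw [key, key2]
    have t1 : d' (Sum.inl a) (Sum.inl b⁻¹) ≤
        d' (Sum.inl a) (Sum.inr y) + d' (Sum.inr y) (Sum.inl b⁻¹) := h'.2.2 _ _ _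
    have t2 : d' (Sum.inl a) (Sum.inr y) = d' (Sum.inr y) (Sum.inl a) := h'.2.1 _ _
    linarith
  · rw [key]
    have t1 : d' (Sum.inl a⁻¹) (Sum.inl b) ≤
        d' (Sum.inl a⁻¹) (Sum.inr y) + d' (Sum.inr y) (Sum.inl b) := h'.2.2 _ _ _
    have t2 : d' (Sum.inl a⁻¹) (Sum.inr y) = d' (Sum.inr y) (Sum.inl a⁻¹) := h'.2.1 _ _
    linarith

end GMoves


section VdW
variable {G X : Type*} [Group G]

open scoped Classical

def AltL (l : List (Alphabet G X)) : Prop :=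
  List.Chain' okPair l ∧ ∀ a ∈ l, a ≠ Sum.inl (1 : G)

lemma AltL_nil : AltL ([] : List (Alphabet G X)) := ⟨List.isChain_nil, by simp⟩

lemma AltL.tail {a : Alphabet G X} {t : List (Alphabet G X)} (h : AltL (a :: t)) : AltL t :=
  ⟨(List.isChain_cons.1 h.1).2, fun b hb => h.2 b (List.mem_cons_of_mem a hb)⟩

lemma okPair_inl_shape (g g' : G) (b : Alphabet G X) (h : okPair (Sum.inl g) b) :
    okPair (Sum.inl g') b := by
  rcases b with h' | v <;> simp_all [okPair]

lemma okPair_of_ne_fInv (z : X ⊕ X) (b : Alphabet G X) (h : b ≠ formalInv (Sum.inr z)) :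
    okPair (Sum.inr z : Alphabet G X) b := by
  rcases b with h' | v
  · simp [okPair]
  · simp only [okPair]; exact h

lemma head_not_inl_of_chain_inl {g : G} {t : List (Alphabet G X)}
    (h : List.Chain' okPair (Sum.inl g :: t)) :
    t = [] ∨ ∃ (v : X ⊕ X) (t' : List (Alphabet G X)), t = Sum.inr v :: t' := by
  cases t with
  | nil => exact Or.inl rfl
  | cons a t' =>
    rcases a with h' | v
    · exact absurd (List.isChain_cons_cons.1 h).1 (by simp [okPair])
    · exact Or.inr ⟨v, t', rfl⟩

noncomputable def actG (g : G) (l : List (Alphabet G X)) : List (Alphabet G X) :=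
  match l with
  | Sum.inl h :: t => if g * h = 1 then t else Sum.inl (g * h) :: t
  | l => if g = 1 then l else Sum.inl g :: l

@[simp] lemma actG_nil (g : G) :
    actG g ([] : List (Alphabet G X)) = if g = 1 then [] else [Sum.inl g] := rfl

@[simp] lemma actG_consG (g h : G) (t : List (Alphabet G X)) :
    actG g (Sum.inl h :: t) = if g * h = 1 then t else Sum.inl (g * h) :: t := rfl

@[simp] lemma actG_consX (g : G) (v : X ⊕ X) (t : List (Alphabet G X)) :
    actG g (Sum.inr v :: t) = if g = 1 then Sum.inr v :: t else Sum.inl g :: Sum.inr v :: t := rfl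

noncomputable def actZ (z : X ⊕ X) (l : List (Alphabet G X)) : List (Alphabet G X) :=
  match l with
  | a :: t => if a = formalInv (Sum.inr z) then t else Sum.inr z :: a :: t
  | [] => [Sum.inr z]

@[simp] lemma actZ_nil (z : X ⊕ X) : actZ z ([] : List (Alphabet G X)) = [Sum.inr z] := rfl

@[simp] lemma actZ_cons (z : X ⊕ X) (a : Alphabet G X) (t : List (Alphabet G X)) :
    actZ z (a :: t) = if a = formalInv (Sum.inr z) then t else Sum.inr z :: a :: t := rfl

@[simp] lemma fInv_inr_swap (z : X ⊕ X) :
    formalInv (Sum.inr z : Alphabet G X) = Sum.inr z.swap := by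
  rcases z with x | x <;> rfl

lemma actG_alt {g : G} {l : List (Alphabet G X)} (h : AltL l) : AltL (actG g l) := by
  cases l with
  | nil =>
    rw [actG_nil]
    split_ifs with hg
    · exact AltL_nil
    · refine ⟨List.isChain_singleton _, fun a ha => ?_⟩
      rw [List.mem_singleton] at ha
      subst ha
      simp [hg]
  | cons a t =>
    rcases a with k | v
    · rw [actG_consG]
      split_ifs with hg
      · exact h.tail
      · refine ⟨?_, ?_⟩
        · apply List.isChain_cons.2
          refine ⟨fun b hb => ?_, h.tail.1⟩
          have hb' : t.head? = some b := hb
          have := (List.isChain_cons.1 h.1).1 b hb'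
          exact okPair_inl_shape k _ b this
        · intro b hb
          rcases List.mem_cons.1 hb with rfl | hb'
          · simpa using hg
          · exact h.2 b (List.mem_cons_of_mem _ hb')
    · rw [actG_consX]
      split_ifs with hg
      · exact h
      · refine ⟨List.isChain_cons_cons.2 ⟨by simp [okPair], h.1⟩, ?_⟩
        intro b hb
        rcases List.mem_cons.1 hb with rfl | hb'
        · simpa using hg
        · exact h.2 b hb'

lemma actZ_alt {z : X ⊕ X} {l : List (Alphabet G X)} (h : AltL l) : AltL (actZ z l) := by
  cases l with
  | nil => exact ⟨List.isChain_singleton _, by simp⟩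
  | cons a t =>
    rw [actZ_cons]
    split_ifs with ha
    · exact h.tail
    · refine ⟨List.isChain_cons_cons.2 ⟨okPair_of_ne_fInv z a ha, h.1⟩, ?_⟩
      intro b hb
      rcases List.mem_cons.1 hb with rfl | hb'
      · simp
      · exact h.2 b hb'

lemma actG_one {l : List (Alphabet G X)} (h : AltL l) : actG 1 l = l := by
  cases l with
  | nil => simp
  | cons a t =>
    rcases a with k | v
    · have hk : k ≠ 1 := fun hk => by
        exact (h.2 (Sum.inl k) List.mem_cons_self) (by rw [hk])
      simp [hk]
    · simp

lemma actG_mul {l : List (Alphabet G X)} (g k : G) (h : AltL l) :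
    actG g (actG k l) = actG (g * k) l := by
  cases l with
  | nil =>
    by_cases hk : k = 1
    · simp [hk]
    · by_cases hgk : g * k = 1 <;> simp [hk, hgk]
  | cons a t =>
    rcases a with m | v
    · by_cases hkm : k * m = 1
      · have hgm : g * k * m = g := by rw [mul_assoc, hkm, mul_one]
        rw [actG_consG, if_pos hkm, actG_consG, hgm]
        rcases head_not_inl_of_chain_inl h.1 with rfl | ⟨v, t', rfl⟩
        · simp
        · simp
      · have hassoc : g * (k * m) = g * k * m := (mul_assoc g k m).symm
        rw [actG_consG, if_neg hkm, actG_consG, actG_consG, hassoc]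
      -- note: both sides now agree definitionally
    · by_cases hk : k = 1
      · subst hk; rw [actG_one h, mul_one]
      · rw [actG_consX, if_neg hk, actG_consG]
        by_cases hgk : g * k = 1 <;> simp [hgk]

lemma actZ_actZ_swap (z : X ⊕ X) {l : List (Alphabet G X)} (h : AltL l) :
    actZ z (actZ z.swap l) = l := by
  cases l with
  | nil => simp
  | cons a t =>
    rw [actZ_cons]
    split_ifs with ha
    · have ha' : a = Sum.inr z := by rw [ha]; simp
      subst ha'
      cases t with
      | nil => simp
      | cons b t' =>
        rw [actZ_cons, if_neg ?_]
        have hok := (List.isChain_cons_cons.1 h.1).1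
        rcases b with m | w
        · simp
        · simp only [fInv_inr_swap]
          simpa [okPair] using hok
    · rw [actZ_cons, if_pos (by simp)]

/-- The space of alternating normal-form words. -/
def NFS (G X : Type*) [Group G] := {l : List (Alphabet G X) // AltL l}

noncomputable def permG (g : G) : Equiv.Perm (NFS G X) where
  toFun r := ⟨actG g r.1, actG_alt r.2⟩
  invFun r := ⟨actG g⁻¹ r.1, actG_alt r.2⟩
  left_inv r := Subtype.ext (by
    show actG g⁻¹ (actG g r.1) = r.1
    rw [actG_mul g⁻¹ g r.2, inv_mul_cancel, actG_one r.2])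
  right_inv r := Subtype.ext (by
    show actG g (actG g⁻¹ r.1) = r.1
    rw [actG_mul g g⁻¹ r.2, mul_inv_cancel, actG_one r.2])

noncomputable def permZ (v : X ⊕ X) : Equiv.Perm (NFS G X) where
  toFun r := ⟨actZ v r.1, actZ_alt r.2⟩
  invFun r := ⟨actZ v.swap r.1, actZ_alt r.2⟩
  left_inv r := Subtype.ext (by
    show actZ v.swap (actZ v r.1) = r.1
    have := actZ_actZ_swap v.swap r.2
    simpa using this)
  right_inv r := Subtype.ext (by
    show actZ v (actZ v.swap r.1) = r.1
    exact actZ_actZ_swap v r.2)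

noncomputable def phiG : G →* Equiv.Perm (NFS G X) :=
  MonoidHom.mk' permG (by
    intro a b
    apply Equiv.ext
    intro r
    apply Subtype.ext
    exact (actG_mul a b r.2).symm)

noncomputable def phiF : FreeGroup X →* Equiv.Perm (NFS G X) :=
  FreeGroup.lift (fun x => permZ (Sum.inl x))

noncomputable def PhiFP : FP G X →* Equiv.Perm (NFS G X) :=
  Coprod.lift phiG phiF

noncomputable def actL : Alphabet G X → List (Alphabet G X) → List (Alphabet G X)
  | Sum.inl g, l => actG g l
  | Sum.inr v, l => actZ v l

lemma PhiFP_letter (s : Alphabet G X) (r : NFS G X) :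
    (PhiFP (toFP s) r).1 = actL s r.1 := by
  rcases s with g | x | x
  · have : toFP (Sum.inl g : Alphabet G X) = Coprod.inl g := rfl
    rw [this]
    rw [show (PhiFP (Coprod.inl g) : Equiv.Perm (NFS G X)) = phiG g from
      Coprod.lift_apply_inl _ _ g]
    rfl
  · have : toFP (Sum.inr (Sum.inl x) : Alphabet G X) = Coprod.inr (FreeGroup.of x) := rfl
    rw [this]
    rw [show (PhiFP (Coprod.inr (FreeGroup.of x)) : Equiv.Perm (NFS G X)) =
      permZ (Sum.inl x) from by
        rw [show (PhiFP (Coprod.inr (FreeGroup.of x)) : Equiv.Perm (NFS G X)) =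
          phiF (FreeGroup.of x) from Coprod.lift_apply_inr _ _ _]
        simp [phiF]]
    rfl
  · have h1 : toFP (Sum.inr (Sum.inr x) : Alphabet G X) =
      (Coprod.inr (FreeGroup.of x) : FP G X)⁻¹ := rfl
    rw [h1, map_inv]
    rw [show (PhiFP (Coprod.inr (FreeGroup.of x)) : Equiv.Perm (NFS G X)) =
      permZ (Sum.inl x) from by
        rw [show (PhiFP (Coprod.inr (FreeGroup.of x)) : Equiv.Perm (NFS G X)) =
          phiF (FreeGroup.of x) from Coprod.lift_apply_inr _ _ _]
        simp [phiF]]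
    rfl

noncomputable def nfL (u : List (Alphabet G X)) : List (Alphabet G X) :=
  List.foldr actL [] u

lemma PhiFP_word (u : List (Alphabet G X)) :
    (PhiFP (wordProd u) (⟨[], AltL_nil⟩ : NFS G X)).1 = nfL u := by
  induction u with
  | nil => simp [wordProd, nfL, map_one]; rfl
  | cons s t ih =>
    rw [wordProd_cons, map_mul]
    show (PhiFP (toFP s) (PhiFP (wordProd t) ⟨[], AltL_nil⟩)).1 = nfL (s :: t)
    rw [PhiFP_letter s _]
    rw [show nfL (s :: t) = actL s (nfL t) from rfl, ← ih]

lemma nfL_eq_nil_of_trivial {u : List (Alphabet G X)} (h : wordProd u = 1) : nfL u = [] := by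
  have := PhiFP_word (G := G) (X := X) u
  rw [h, map_one] at this
  exact this.symm

end VdW


section NFsec
variable {G X : Type*} [Group G]

open scoped Classical

noncomputable def ffil : List (Alphabet G X) → List (Alphabet G X)
  | [] => []
  | Sum.inl g :: t => if g = 1 then ffil t else Sum.inl g :: ffil t
  | Sum.inr v :: t => Sum.inr v :: ffil t

lemma ffil_nil_all_one : ∀ {u : List (Alphabet G X)}, ffil u = [] →
    ∀ a ∈ u, a = Sum.inl (1 : G) := by
  intro u
  induction u with
  | nil => intro _ a ha; simp at ha
  | cons s t ih =>
    intro h a ha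
    rcases s with g | v
    · rw [show ffil (Sum.inl g :: t) = if g = 1 then ffil t else Sum.inl g :: ffil t from rfl]
        at h
      split_ifs at h with hg
      · rcases List.mem_cons.1 ha with rfl | ha'
        · rw [hg]
        · exact ih h a ha'
    · simp [ffil] at h

def NoPat (u : List (Alphabet G X)) : Prop :=
  ∀ (A C : List (Alphabet G X)) (v : X ⊕ X),
    u ≠ A ++ Sum.inr v :: Sum.inl 1 :: formalInv (Sum.inr v) :: C

lemma NoPat.tail {s : Alphabet G X} {t : List (Alphabet G X)} (h : NoPat (s :: t)) :
    NoPat t := by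
  intro A C v ht
  exact h (s :: A) C v (by rw [ht]; rfl)

lemma nfL_of_irred : ∀ (u : List (Alphabet G X)), List.Chain' okPair u → NoPat u →
    nfL u = ffil u := by
  intro u
  induction u with
  | nil => intro _ _; rfl
  | cons s t ih =>
    intro hirr hnp
    have htail : List.Chain' okPair t := (List.isChain_cons.1 hirr).2
    rw [show nfL (s :: t) = actL s (nfL t) from rfl, ih htail hnp.tail]
    rcases s with g | v
    · -- G letter
      cases t with
      | nil => by_cases hg : g = 1 <;> simp [ffil, actL, hg]
      | cons a t' =>
        rcases a with k | w
        · exact absurd (List.isChain_cons_cons.1 hirr).1 (by simp [okPair])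
        · show actG g (ffil (Sum.inr w :: t')) = ffil (Sum.inl g :: Sum.inr w :: t')
          rw [show ffil (Sum.inr w :: t') = Sum.inr w :: ffil t' from rfl]
          by_cases hg : g = 1 <;>
            simp [ffil, hg]
    · -- X letter
      show actZ v (ffil t) = ffil (Sum.inr v :: t)
      rw [show ffil (Sum.inr v :: t) = Sum.inr v :: ffil t from rfl]
      cases t with
      | nil => simp [ffil]
      | cons a t' =>
        rcases a with k | w
        · by_cases hk : k = 1
          · subst hk
            rw [show ffil (Sum.inl (1:G) :: t') = ffil t' from by simp [ffil]]
            cases t' with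
            | nil => simp [ffil]
            | cons b t'' =>
              rcases b with k' | w'
              · exact absurd (List.isChain_cons_cons.1 htail).1 (by simp [okPair])
              · have hne : (Sum.inr w' : Alphabet G X) ≠ formalInv (Sum.inr v) := by
                  intro hw
                  exact hnp [] t'' v (by rw [← hw]; simp)
                rw [show ffil (Sum.inr w' :: t'') = Sum.inr w' :: ffil t'' from rfl,
                  actZ_cons, if_neg hne]
          · have hne : (Sum.inl k : Alphabet G X) ≠ formalInv (Sum.inr v) := by
              rcases v with x | x <;> simp [formalInv]
            rw [show ffil (Sum.inl k :: t') = Sum.inl k :: ffil t' from by simp [ffil, hk],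
              actZ_cons, if_neg hne]
        · have hne : (Sum.inr w : Alphabet G X) ≠ formalInv (Sum.inr v) := by
            have := (List.isChain_cons_cons.1 hirr).1
            simpa [okPair] using this
          rw [show ffil (Sum.inr w :: t') = Sum.inr w :: ffil t' from rfl,
            actZ_cons, if_neg hne]

lemma NFirr {u : List (Alphabet G X)} (hirr : List.Chain' okPair u)
    (htriv : wordProd u = 1) (hX : ∃ a ∈ u, a.isRight = true) :
    ∃ (A C : List (Alphabet G X)) (v : X ⊕ X),
      u = A ++ Sum.inr v :: Sum.inl 1 :: formalInv (Sum.inr v) :: C := by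
  by_contra hno
  push_neg at hno
  have hnp : NoPat u := fun A C v h => hno A C v h
  have h1 := nfL_of_irred u hirr hnp
  rw [nfL_eq_nil_of_trivial htriv] at h1
  obtain ⟨a, ha, har⟩ := hX
  rw [ffil_nil_all_one h1.symm a ha] at har
  simp at har

lemma wordProd_mergeG (P Q : List (Alphabet G X)) (g h : G) :
    wordProd (P ++ Sum.inl g :: Sum.inl h :: Q) = wordProd (P ++ Sum.inl (g * h) :: Q) := by
  rw [wordProd_append, wordProd_append, wordProd_cons, wordProd_cons, wordProd_cons]
  have : toFP (Sum.inl (g*h) : Alphabet G X) =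
      toFP (Sum.inl g : Alphabet G X) * toFP (Sum.inl h : Alphabet G X) := by
    simp [toFP]
  rw [this, mul_assoc]

lemma not_okPair_cases {a b : Alphabet G X} (h : ¬ okPair a b) :
    (∃ g h : G, a = Sum.inl g ∧ b = Sum.inl h) ∨
    (∃ v : X ⊕ X, a = Sum.inr v ∧ b = formalInv (Sum.inr v)) := by
  rcases a with g | v <;> rcases b with k | w
  · exact Or.inl ⟨g, k, rfl, rfl⟩
  · exact absurd trivial h
  · exact absurd trivial h
  · refine Or.inr ⟨v, rfl, ?_⟩
    by_contra hne
    exact h hne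

theorem NFmain : ∀ (n : ℕ) (u : List (Alphabet G X)), u.length ≤ n → wordProd u = 1 →
    (∃ a ∈ u, a.isRight = true) →
    ∃ (A C : List (Alphabet G X)) (v : X ⊕ X) (B : List (Alphabet G X)),
      u = A ++ Sum.inr v :: B ++ formalInv (Sum.inr v) :: C ∧
      (∀ b ∈ B, ∃ g : G, b = Sum.inl g) ∧ wordProd B = 1 := by
  intro n
  induction n with
  | zero =>
    intro u hlen _ hX
    obtain ⟨a, ha, _⟩ := hX
    rw [List.length_eq_zero_iff.1 (Nat.le_zero.1 hlen)] at ha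
    simp at ha
  | succ n ih =>
    intro u hlen htriv hX
    by_cases hirr : List.Chain' okPair u
    · obtain ⟨A, C, v, hu⟩ := NFirr hirr htriv hX
      refine ⟨A, C, v, [Sum.inl 1], by simpa using hu, by simp, ?_⟩
      show wordProd [Sum.inl (1:G)] = 1
      simp [wordProd, toFP]
    · obtain ⟨P, a, b, Q, hu, hnok⟩ := chain'_break _ u hirr
      rcases not_okPair_cases hnok with ⟨g, h, rfl, rfl⟩ | ⟨v, rfl, rfl⟩
      · -- merge two G letters
        subst hu
        have hlen₂ : (P ++ Sum.inl (g*h) :: Q).length ≤ n := by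
          have := hlen
          simp only [List.length_append, List.length_cons, List.length_nil] at this ⊢
          omega
        have htriv₂ : wordProd (P ++ Sum.inl (g*h) :: Q) = 1 := by
          rw [← wordProd_mergeG]; exact htriv
        have hX₂ : ∃ a ∈ P ++ Sum.inl (g*h) :: Q, a.isRight = true := by
          obtain ⟨a, ha, har⟩ := hX
          rcases a with k | w
          · simp at har
          · refine ⟨Sum.inr w, ?_, rfl⟩
            simp only [List.mem_append, List.mem_cons] at ha ⊢
            rcases ha with h1 | h1 | h1 | h1
            · exact Or.inl h1
            · exact absurd h1 (by simp)
            · exact absurd h1 (by simp)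
            · exact Or.inr (Or.inr h1)
        obtain ⟨A₂, C₂, v, B₂, he, hBG, hBtriv⟩ := ih _ hlen₂ htriv₂ hX₂
        -- he : P ++ inl (g*h) :: Q = (A₂ ++ inr v :: B₂) ++ fInv (inr v) :: C₂
        rcases helper3' (A := P) (B := Sum.inl (g*h) :: Q)
            (B₁ := A₂ ++ Sum.inr v :: B₂) (B₂ := C₂) (m := formalInv (Sum.inr v)) he with
          ⟨P₂, hP, hC₂⟩ | ⟨P₁, hPP, hrest⟩
        · -- merged letter lies inside C₂
          refine ⟨A₂, P₂ ++ Sum.inl g :: Sum.inl h :: Q, v, B₂, ?_, hBG, hBtriv⟩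
          rw [hP]
          simp [List.append_assoc]
        · -- fInv-marker lies in (inl (g*h) :: Q)
          cases P₁ with
          | nil =>
            exfalso
            rw [List.nil_append] at hrest
            injection hrest with h1 _
            rcases v with x | x <;> simp [formalInv] at h1
          | cons e P₁' =>
            rw [List.cons_append] at hrest
            injection hrest with h1 h2
            -- h1 : inl (g*h) = e ;  h2 : Q = P₁' ++ fInv :: C₂
            -- hPP : A₂ ++ inr v :: B₂ = P ++ e :: P₁'
            rw [← h1] at hPP
            rcases helper3' (A := A₂) (B := Sum.inr v :: B₂) (B₁ := P)
                (B₂ := P₁') (m := Sum.inl (g*h)) hPP with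
              ⟨P₃, hA₂, hP₁'⟩ | ⟨P₃, hP, hrest2⟩
            · -- merged letter inside A₂
              refine ⟨P ++ Sum.inl g :: Sum.inl h :: P₃, C₂, v, B₂, ?_, hBG, hBtriv⟩
              rw [h2, hP₁']
              simp [List.append_assoc]
            · -- inr v marker inside (inl (g*h) :: P₁')
              cases P₃ with
              | nil =>
                exfalso
                rw [List.nil_append] at hrest2
                injection hrest2 with h3 _
                simp at h3
              | cons e' P₃' =>
                rw [List.cons_append] at hrest2
                injection hrest2 with h3 h4
                -- h3 : inr v = e' ; h4 : B₂ = P₃' ++ inl (g*h) :: P₁'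
                refine ⟨A₂, C₂, v, P₃' ++ Sum.inl g :: Sum.inl h :: P₁', ?_, ?_, ?_⟩
                · rw [h2, hP, ← h3]
                  simp [List.append_assoc]
                · intro b hb
                  simp only [List.mem_append, List.mem_cons] at hb
                  rcases hb with hb | hb | hb | hb
                  · exact hBG b (by rw [h4]; simp [hb])
                  · exact ⟨g, hb⟩
                  · exact ⟨h, hb⟩
                  · exact hBG b (by rw [h4]; simp [hb])
                · rw [wordProd_mergeG P₃' P₁' g h, ← h4]
                  exact hBtriv
      · -- cancelling X pair found directly
        exact ⟨P, Q, v, [], by simpa using hu, by simp, rfl⟩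

end NFsec


section Partner
variable {G X : Type*} [Group G]

@[simp] lemma toFP_inr_swap (v : X ⊕ X) :
    toFP (Sum.inr v.swap : Alphabet G X) = (toFP (Sum.inr v : Alphabet G X))⁻¹ := by
  rcases v with x | x <;> simp [toFP]

lemma contract_eq (A' B' C' : List (Alphabet G X)) (v : X ⊕ X) (hB : wordProd B' = 1) :
    wordProd ((A' ++ Sum.inr v :: B') ++ formalInv (Sum.inr v) :: C') =
      wordProd (A' ++ (B' ++ C')) := by
  simp [wordProd_append, wordProd_cons, toFP_formalInv, hB, mul_assoc]

lemma partner_aux : ∀ (n : ℕ) (u : List (Alphabet G X)), u.length ≤ n → wordProd u = 1 →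
    ∀ (A C : List (Alphabet G X)) (va : X ⊕ X), u = A ++ Sum.inr va :: C →
    (∃ B₁ B₂, C = B₁ ++ formalInv (Sum.inr va) :: B₂ ∧ wordProd B₁ = 1) ∨
    (∃ B₁ B₂, A = B₁ ++ formalInv (Sum.inr va) :: B₂ ∧ wordProd B₂ = 1) := by
  intro n
  induction n with
  | zero =>
    intro u hlen _ A C va hu
    rw [List.length_eq_zero_iff.1 (Nat.le_zero.1 hlen)] at hu
    exact absurd hu.symm (by simp)
  | succ n ih =>
    intro u hlen htriv A C va hu
    have hX : ∃ a ∈ u, a.isRight = true := ⟨Sum.inr va, by rw [hu]; simp, rfl⟩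
    obtain ⟨A', C', v, B', he, hBG, hB'triv⟩ := NFmain (n+1) u hlen htriv hX
    have hfa : ∀ w : X ⊕ X, ¬ (formalInv (Sum.inr w) ∈ B') := by
      intro w hw
      obtain ⟨g, hg⟩ := hBG _ hw
      rw [fInv_inr_swap] at hg
      simp at hg
    have hLu := congrArg List.length he
    simp only [List.length_append, List.length_cons, List.length_nil] at hLu
    rw [hu] at he
    rcases helper3' (A := A) (B := Sum.inr va :: C)
        (B₁ := A' ++ Sum.inr v :: B') (B₂ := C') (m := formalInv (Sum.inr v)) he with
      ⟨P₂, hA, hC'⟩ | ⟨P₁, hB₁, hc⟩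
    · -- case (i): our letter lies inside C'
      have h6 : wordProd ((A' ++ (B' ++ P₂)) ++ Sum.inr va :: C) = 1 := by
        have e2 : (A' ++ (B' ++ P₂)) ++ Sum.inr va :: C = A' ++ (B' ++ C') := by
          rw [hC']; simp [List.append_assoc]
        rw [e2, ← contract_eq A' B' C' v hB'triv, ← he]
        rw [hu] at htriv
        exact htriv
      have hlen2 : ((A' ++ (B' ++ P₂)) ++ Sum.inr va :: C).length ≤ n := by
        have hLC := congrArg List.length hC'
        have hLuu := congrArg List.length hu
        simp only [List.length_append, List.length_cons, List.length_nil] at hLC hLuu ⊢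
        omega
      rcases ih _ hlen2 h6 (A' ++ (B' ++ P₂)) C va rfl with
        ⟨B₁, B₂, hCdec, hB₁⟩ | ⟨B₁, B₂, hAdec, hB₂⟩
      · exact Or.inl ⟨B₁, B₂, hCdec, hB₁⟩
      · -- partner inside A' ++ (B' ++ P₂); locate it
        rcases helper3' (A := A') (B := B' ++ P₂) (B₁ := B₁) (B₂ := B₂)
            (m := formalInv (Sum.inr va)) hAdec with
          ⟨P₄, hA', hB₂eq⟩ | ⟨P₄, hB₁eq, hr3⟩
        · -- partner inside A'
          refine Or.inr ⟨B₁, (P₄ ++ Sum.inr v :: B') ++ formalInv (Sum.inr v) :: P₂, ?_, ?_⟩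
          · rw [hA, hA']
            simp [List.append_assoc]
          · rw [contract_eq P₄ B' P₂ v hB'triv]
            have : P₄ ++ (B' ++ P₂) = B₂ := hB₂eq.symm
            rw [this]
            exact hB₂
        · rcases helper3' (A := B') (B := P₂) (B₁ := P₄) (B₂ := B₂)
              (m := formalInv (Sum.inr va)) hr3 with
            ⟨P₅, hB'eq, _⟩ | ⟨P₅, hP₄, hP₂⟩
          · exact absurd (show formalInv (Sum.inr va) ∈ B' by rw [hB'eq]; simp) (hfa va)
          · -- partner inside P₂
            refine Or.inr ⟨(A' ++ Sum.inr v :: B') ++ formalInv (Sum.inr v) :: P₅, B₂, ?_, hB₂⟩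
            rw [hA, hP₂]
            simp [List.append_assoc]
    · -- our letter is a marker or inside A'
      cases P₁ with
      | nil =>
        -- our letter is the fInv-marker
        rw [List.nil_append] at hc
        injection hc with h1 h2
        have hAeq : A = A' ++ Sum.inr v :: B' := by
          simpa using hB₁.symm
        have hfi : formalInv (Sum.inr va : Alphabet G X) = Sum.inr v := by
          rw [h1, formalInv_formalInv]
        refine Or.inr ⟨A', B', ?_, hB'triv⟩
        rw [hAeq, hfi]
      | cons e P₁' =>
        rw [List.cons_append] at hc
        injection hc with h1 h2
        rw [← h1] at hB₁
        rcases helper3' (A := A') (B := Sum.inr v :: B') (B₁ := A) (B₂ := P₁')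
            (m := Sum.inr va) hB₁ with
          ⟨P₃, hA', hP₁'⟩ | ⟨P₃, hA, hr2⟩
        · -- case (ii): our letter inside A'
          have h6 : wordProd (A ++ Sum.inr va :: (P₃ ++ (B' ++ C'))) = 1 := by
            have e2 : A ++ Sum.inr va :: (P₃ ++ (B' ++ C')) = A' ++ (B' ++ C') := by
              rw [hA']; simp [List.append_assoc]
            rw [e2, ← contract_eq A' B' C' v hB'triv, ← he]
            rw [hu] at htriv
            exact htriv
          have hlen2 : (A ++ Sum.inr va :: (P₃ ++ (B' ++ C'))).length ≤ n := by
            have hLA := congrArg List.length hA'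
            have hLuu := congrArg List.length hu
            simp only [List.length_append, List.length_cons, List.length_nil] at hLA hLuu ⊢
            omega
          rcases ih _ hlen2 h6 A (P₃ ++ (B' ++ C')) va rfl with
            ⟨B₁, B₂, hCdec, hB₁t⟩ | ⟨B₁, B₂, hAdec, hB₂⟩
          · -- partner to the right, inside P₃ ++ B' ++ C'
            rcases helper3' (A := P₃) (B := B' ++ C') (B₁ := B₁) (B₂ := B₂)
                (m := formalInv (Sum.inr va)) hCdec with
              ⟨P₄, hP₃, hB₂eq⟩ | ⟨P₄, hB₁eq, hr3⟩
            · refine Or.inl ⟨B₁, (P₄ ++ Sum.inr v :: B') ++ formalInv (Sum.inr v) :: C',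
                ?_, hB₁t⟩
              rw [h2, hP₁', hP₃]
              simp [List.append_assoc]
            · rcases helper3' (A := B') (B := C') (B₁ := P₄) (B₂ := B₂)
                  (m := formalInv (Sum.inr va)) hr3 with
                ⟨P₅, hB'eq, _⟩ | ⟨P₅, hP₄, hC'⟩
              · exact absurd (show formalInv (Sum.inr va) ∈ B' by rw [hB'eq]; simp) (hfa va)
              · refine Or.inl ⟨(P₃ ++ Sum.inr v :: B') ++ formalInv (Sum.inr v) :: P₅, B₂,
                  ?_, ?_⟩
                · rw [h2, hP₁', hC']
                  simp [List.append_assoc]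
                · rw [contract_eq P₃ B' P₅ v hB'triv]
                  have : P₃ ++ (B' ++ P₅) = B₁ := by
                    rw [hB₁eq, hP₄]
                  rw [this]
                  exact hB₁t
          · exact Or.inr ⟨B₁, B₂, hAdec, hB₂⟩
        · -- our letter is the inr v marker, or inside B'
          cases P₃ with
          | nil =>
            rw [List.nil_append] at hr2
            injection hr2 with h3 h4
            have hveq : v = va := by
              have := h3
              injection this with h5
            refine Or.inl ⟨B', C', ?_, hB'triv⟩
            rw [h2, ← h4, hveq]
          | cons e' P₃' =>
            rw [List.cons_append] at hr2
            injection hr2 with h3 h4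
            exfalso
            have : Sum.inr va ∈ B' := by rw [h4]; simp
            obtain ⟨g, hg⟩ := hBG _ this
            simp at hg

end Partner


section Moves
variable {G X : Type*} [Group G] {d' : (G ⊕ X) → (G ⊕ X) → ℝ} {dG : G → G → ℝ}

lemma isRight_fInv (t : Alphabet G X) : (formalInv t).isRight = t.isRight := by
  rcases t with g | x | x <;> rfl

lemma wp_sandwich (P V₁ V₂ : List (Alphabet G X)) (t : Alphabet G X)
    (h : wordProd V₁ = 1) :
    wordProd (P ++ t :: (V₁ ++ formalInv t :: V₂)) = wordProd (P ++ V₂) := by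
  simp [wordProd_append, wordProd_cons, toFP_formalInv, h, mul_assoc]

lemma wp_sandwich' (V₁ V₂ Q : List (Alphabet G X)) (t : Alphabet G X)
    (h : wordProd V₂ = 1) :
    wordProd ((V₁ ++ formalInv t :: V₂) ++ t :: Q) = wordProd (V₁ ++ Q) := by
  simp [wordProd_append, wordProd_cons, toFP_formalInv, h, mul_assoc]

lemma M2gen (h' : IsMetricD d') (hGinv : IsBiInvariant dG) (hG : IsMetricD dG)
    (hextG : ∀ g h : G, d' (Sum.inl g) (Sum.inl h) = dG g h)
    (W₁ W₂ U₁ U₂ : List (Alphabet G X)) (wp : Alphabet G X) (va : X ⊕ X)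
    (hl1 : W₁.length = U₁.length) (hl2 : W₂.length = U₂.length)
    (htriv : wordProd (U₁ ++ Sum.inr va :: U₂) = 1)
    (s : Alphabet G X)
    (hs0 : extD d' wp s = 0)
    (hsa : extD d' (Sum.inr va) s ≤ extD d' wp (Sum.inr va)) :
    ∃ U₁' U₂' : List (Alphabet G X),
      U₁'.length = U₁.length ∧ U₂'.length = U₂.length ∧
      wordProd (U₁' ++ s :: U₂') = 1 ∧
      rho (extD d') (W₁ ++ wp :: W₂) (U₁' ++ s :: U₂') ≤
        rho (extD d') (W₁ ++ wp :: W₂) (U₁ ++ Sum.inr va :: U₂) ∧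
      List.countP Sum.isRight (U₁' ++ s :: U₂') + 2 =
        List.countP Sum.isRight (U₁ ++ Sum.inr va :: U₂) +
          (if Sum.isRight s = true then 2 else 0) ∧
      ((U₁' = U₁ ∧ ∃ V₁ V₂, U₂ = V₁ ++ formalInv (Sum.inr va) :: V₂ ∧
          U₂' = V₁ ++ formalInv s :: V₂) ∨
       (U₂' = U₂ ∧ ∃ V₁ V₂, U₁ = V₁ ++ formalInv (Sum.inr va) :: V₂ ∧
          U₁' = V₁ ++ formalInv s :: V₂)) := by
  have dnn := extD_nonneg h' (G := G) (X := X)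
  rcases partner_aux (U₁ ++ Sum.inr va :: U₂).length _ le_rfl htriv U₁ U₂ va rfl with
    ⟨V₁, V₂, hU₂, hV₁⟩ | ⟨V₁, V₂, hU₁, hV₂⟩
  · -- partner to the right
    refine ⟨U₁, V₁ ++ formalInv s :: V₂, rfl, ?_, ?_, ?_, ?_, Or.inl ⟨rfl, V₁, V₂, hU₂, rfl⟩⟩
    · rw [hU₂]; simp
    · have e1 : wordProd (U₁ ++ s :: (V₁ ++ formalInv s :: V₂)) = wordProd (U₁ ++ V₂) :=
        wp_sandwich _ _ _ _ hV₁
      have e2 : wordProd (U₁ ++ Sum.inr va :: (V₁ ++ formalInv (Sum.inr va) :: V₂)) =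
          wordProd (U₁ ++ V₂) := wp_sandwich _ _ _ _ hV₁
      rw [e1, ← e2, ← hU₂]
      exact htriv
    · -- cost
      have h9 := congrArg List.length hU₂
      simp only [List.length_append, List.length_cons, List.length_nil] at h9
      have hVlen : V₁.length < W₂.length := by omega
      obtain ⟨Y₁, wq, Y₂, hW₂, hY₁⟩ := split1 W₂ V₁.length hVlen
      have hY₂ : Y₂.length = V₂.length := by
        have h8 := congrArg List.length hW₂
        simp only [List.length_append, List.length_cons, List.length_nil] at h8
        omega
      rw [hW₂, hU₂]
      have c1 : rho (extD d') (W₁ ++ wp :: (Y₁ ++ wq :: Y₂))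
          (U₁ ++ s :: (V₁ ++ formalInv s :: V₂)) =
          rho (extD d') W₁ U₁ + extD d' wp s + rho (extD d') Y₁ V₁ +
            extD d' wq (formalInv s) + rho (extD d') Y₂ V₂ := by
        rw [rho_append _ _ hl1, rho_cons, rho_append _ _ hY₁, rho_cons]; ring
      have c2 : rho (extD d') (W₁ ++ wp :: (Y₁ ++ wq :: Y₂))
          (U₁ ++ Sum.inr va :: (V₁ ++ formalInv (Sum.inr va) :: V₂)) =
          rho (extD d') W₁ U₁ + extD d' wp (Sum.inr va) + rho (extD d') Y₁ V₁ +
            extD d' wq (formalInv (Sum.inr va)) + rho (extD d') Y₂ V₂ := by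
        rw [rho_append _ _ hl1, rho_cons, rho_append _ _ hY₁, rho_cons]; ring
      rw [c1, c2]
      have t1 : extD d' wq (formalInv s) ≤
          extD d' wq (Sum.inr va.swap) + extD d' (Sum.inr va.swap) (formalInv s) :=
        tri_midX h' hGinv hG hextG _ _ _
      have t2 : extD d' (Sum.inr va.swap) (formalInv s) = extD d' (Sum.inr va) s := by
        rw [← fInv_inr_swap, extD_fInv h' hGinv hG hextG]
      rw [hs0, fInv_inr_swap]
      linarith [hsa, t1, t2]
    · -- count
      rw [hU₂]
      simp only [List.countP_append, List.countP_cons, isRight_fInv]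
      rcases s with g | v <;> simp [Sum.isRight] <;> omega
  · -- partner to the left
    refine ⟨V₁ ++ formalInv s :: V₂, U₂, ?_, rfl, ?_, ?_, ?_, Or.inr ⟨rfl, V₁, V₂, hU₁, rfl⟩⟩
    · rw [hU₁]; simp
    · have e1 : wordProd ((V₁ ++ formalInv s :: V₂) ++ s :: U₂) = wordProd (V₁ ++ U₂) :=
        wp_sandwich' _ _ _ _ hV₂
      have e2 : wordProd ((V₁ ++ formalInv (Sum.inr va) :: V₂) ++ Sum.inr va :: U₂) =
          wordProd (V₁ ++ U₂) := wp_sandwich' _ _ _ _ hV₂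
      rw [e1, ← e2, ← hU₁]
      exact htriv
    · -- cost
      have h9 := congrArg List.length hU₁
      simp only [List.length_append, List.length_cons, List.length_nil] at h9
      have hVlen : V₁.length < W₁.length := by omega
      obtain ⟨Y₁, wq, Y₂, hW₁, hY₁⟩ := split1 W₁ V₁.length hVlen
      have hY₂ : Y₂.length = V₂.length := by
        have h8 := congrArg List.length hW₁
        simp only [List.length_append, List.length_cons, List.length_nil] at h8
        omega
      rw [hW₁, hU₁]
      have hlen' : (Y₁ ++ wq :: Y₂).length = (V₁ ++ formalInv s :: V₂).length := by
        simp [hY₁, hY₂]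
      have hlen'' : (Y₁ ++ wq :: Y₂).length = (V₁ ++ formalInv (Sum.inr va) :: V₂).length := by
        simp [hY₁, hY₂]
      have c1 : rho (extD d') ((Y₁ ++ wq :: Y₂) ++ wp :: W₂)
          ((V₁ ++ formalInv s :: V₂) ++ s :: U₂) =
          rho (extD d') Y₁ V₁ + extD d' wq (formalInv s) + rho (extD d') Y₂ V₂ +
            extD d' wp s + rho (extD d') W₂ U₂ := by
        rw [rho_append _ _ hlen', rho_append _ _ hY₁, rho_cons, rho_cons]; ring
      have c2 : rho (extD d') ((Y₁ ++ wq :: Y₂) ++ wp :: W₂)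
          ((V₁ ++ formalInv (Sum.inr va) :: V₂) ++ Sum.inr va :: U₂) =
          rho (extD d') Y₁ V₁ + extD d' wq (formalInv (Sum.inr va)) + rho (extD d') Y₂ V₂ +
            extD d' wp (Sum.inr va) + rho (extD d') W₂ U₂ := by
        rw [rho_append _ _ hlen'', rho_append _ _ hY₁, rho_cons, rho_cons]; ring
      rw [c1, c2]
      have t1 : extD d' wq (formalInv s) ≤
          extD d' wq (Sum.inr va.swap) + extD d' (Sum.inr va.swap) (formalInv s) :=
        tri_midX h' hGinv hG hextG _ _ _
      have t2 : extD d' (Sum.inr va.swap) (formalInv s) = extD d' (Sum.inr va) s := by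
        rw [← fInv_inr_swap, extD_fInv h' hGinv hG hextG]
      rw [hs0, fInv_inr_swap]
      linarith [hsa, t1, t2]
    · -- count
      rw [hU₁]
      simp only [List.countP_append, List.countP_cons, isRight_fInv]
      rcases s with g | v <;> simp [Sum.isRight] <;> omega

end Moves


section Main
variable {G X : Type*} [Group G] {d' : (G ⊕ X) → (G ⊕ X) → ℝ} {dG : G → G → ℝ}

@[simp] lemma formalInv_inl (g : G) :
    formalInv (Sum.inl g : Alphabet G X) = Sum.inl g⁻¹ := rfl

lemma concat_eq {α : Type*} {L V₁ V₂ : List α} {x y : α}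
    (h : L ++ [x] = V₁ ++ y :: V₂) :
    (V₂ = [] ∧ L = V₁ ∧ x = y) ∨ ∃ V₂', V₂ = V₂' ++ [x] := by
  rcases V₂.eq_nil_or_concat with rfl | ⟨V₂'', e, hV⟩
  · have h2 := List.append_inj' h (by simp)
    exact Or.inl ⟨rfl, h2.1, by simpa using h2.2⟩
  · rw [List.concat_eq_append] at hV
    subst hV
    have h'' : L ++ [x] = (V₁ ++ y :: V₂'') ++ [e] := by rw [h]; simp
    have h2 := List.append_inj' h'' (by simp)
    have hx : x = e := by simpa using h2.2
    exact Or.inr ⟨V₂'', by rw [hx]⟩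

lemma main_reduction (h' : IsMetricD d') (hGinv : IsBiInvariant dG) (hG : IsMetricD dG)
    (hextG : ∀ g h : G, d' (Sum.inl g) (Sum.inl h) = dG g h) :
    ∀ (N : ℕ) (w u : List (Alphabet G X)),
    w.length + u.length + List.countP Sum.isRight w + List.countP Sum.isRight u ≤ N →
    w.length = u.length → wordProd u = 1 →
    ∃ w' u' : List (Alphabet G X), w'.length = u'.length ∧ wordProd w' = wordProd w ∧
      wordProd u' = 1 ∧ List.Chain' okPair w' ∧
      rho (extD d') w' u' ≤ rho (extD d') w u := by
  intro N
  induction N with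
  | zero =>
    intro w u hmu hlen htriv
    have hw0 : w = [] := List.length_eq_zero_iff.1 (by omega)
    have hu0 : u = [] := List.length_eq_zero_iff.1 (by omega)
    subst hw0; subst hu0
    exact ⟨[], [], rfl, rfl, htriv, List.isChain_nil, le_rfl⟩
  | succ N ih =>
    intro w u hmu hlen htriv
    by_cases hirr : List.Chain' okPair w
    · exact ⟨w, u, hlen, rfl, htriv, hirr, le_rfl⟩
    obtain ⟨W₁, a, b, W₂, hw, hnok⟩ := chain'_break _ w hirr
    subst hw
    have hLL := hlen
    simp only [List.length_append, List.length_cons, List.length_nil] at hLL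
    obtain ⟨U₁, p, R, hu1, hU₁len⟩ := split1 u W₁.length (by omega)
    cases R with
    | nil =>
      exfalso
      have h3 := congrArg List.length hu1
      simp at h3
      omega
    | cons q U₂ =>
    subst hu1
    have hLL2 := hlen
    simp only [List.length_append, List.length_cons, List.length_nil] at hLL2
    have hU₂len : U₂.length = W₂.length := by omega
    have hMM := hmu
    simp only [List.length_append, List.length_cons, List.countP_append,
      List.countP_cons, List.countP_nil] at hMM
    rcases not_okPair_cases hnok with ⟨g₁, g₂, rfl, rfl⟩ | ⟨vz, rfl, hb⟩
    · -- CASE A : two adjacent G letters in w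
      rcases p with α | vp
      · rcases q with β | vq
        · -- A1 : merge the two pairs of G letters
          have hπw : wordProd (W₁ ++ Sum.inl (g₁*g₂) :: W₂) =
              wordProd (W₁ ++ Sum.inl g₁ :: Sum.inl g₂ :: W₂) :=
            (wordProd_mergeG _ _ _ _).symm
          have hπu : wordProd (U₁ ++ Sum.inl (α*β) :: U₂) = 1 := by
            rw [← wordProd_mergeG]; exact htriv
          have hcost : rho (extD d') (W₁ ++ Sum.inl (g₁*g₂) :: W₂)
              (U₁ ++ Sum.inl (α*β) :: U₂) ≤
              rho (extD d') (W₁ ++ Sum.inl g₁ :: Sum.inl g₂ :: W₂)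
                (U₁ ++ Sum.inl α :: Sum.inl β :: U₂) := by
            rw [rho_append _ _ hU₁len.symm, rho_append _ _ hU₁len.symm,
              rho_cons, rho_cons, rho_cons]
            linarith [dlemM1 h' hGinv hG hextG g₁ g₂ α β]
          obtain ⟨w', u', hl', hπw', hπu', hirr', hc'⟩ :=
            ih (W₁ ++ Sum.inl (g₁*g₂) :: W₂) (U₁ ++ Sum.inl (α*β) :: U₂)
              (by simp only [List.length_append, List.length_cons, List.countP_append,
                    List.countP_cons, List.countP_nil]
                  simp at hMM ⊢
                  omega)
              (by simp only [List.length_append, List.length_cons, List.length_nil]; omega) hπu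
          exact ⟨w', u', hl', by rw [hπw', hπw], hπu', hirr', le_trans hc' hcost⟩
        · -- A2' : second u-letter is an X letter
          have htriv' : wordProd ((U₁ ++ [Sum.inl α]) ++ Sum.inr vq :: U₂) = 1 := by
            have e : (U₁ ++ [Sum.inl α]) ++ Sum.inr vq :: U₂ =
                U₁ ++ Sum.inl α :: Sum.inr vq :: U₂ := by simp
            rw [e]; exact htriv
          obtain ⟨U₁', U₂', hl1, hl2, hπ, hcost, hcnt, hstruct⟩ :=
            M2gen h' hGinv hG hextG (W₁ ++ [Sum.inl g₁]) W₂ (U₁ ++ [Sum.inl α]) U₂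
              (Sum.inl g₂) vq
              (by simp only [List.length_append, List.length_cons, List.length_nil]; omega)
              hU₂len.symm htriv' (Sum.inl g₂)
              (by simp only [extD]; exact (h'.1 _ _).2 rfl)
              (le_of_eq (extD_symm h' _ _))
          have ew : (W₁ ++ [Sum.inl g₁]) ++ Sum.inl g₂ :: W₂ =
              W₁ ++ Sum.inl g₁ :: Sum.inl g₂ :: W₂ := by simp
          have eu : (U₁ ++ [Sum.inl α]) ++ Sum.inr vq :: U₂ =
              U₁ ++ Sum.inl α :: Sum.inr vq :: U₂ := by simp
          rw [ew, eu] at hcost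
          have hl1' := hl1
          simp only [List.length_append, List.length_cons, List.length_nil] at hl1'
          obtain ⟨w', u', hl', hπw', hπu', hirr', hc'⟩ :=
            ih (W₁ ++ Sum.inl g₁ :: Sum.inl g₂ :: W₂) (U₁' ++ Sum.inl g₂ :: U₂')
              (by simp only [List.length_append, List.length_cons, List.countP_append,
                    List.countP_cons, List.countP_nil] at hcnt ⊢
                  simp at hMM hcnt ⊢
                  omega)
              (by simp only [List.length_append, List.length_cons, List.length_nil]; omega) hπ
          exact ⟨w', u', hl', hπw', hπu', hirr', le_trans hc' hcost⟩
      · -- A2 : first u-letter is an X letter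
        obtain ⟨U₁', U₂', hl1, hl2, hπ, hcost, hcnt, hstruct⟩ :=
          M2gen h' hGinv hG hextG W₁ (Sum.inl g₂ :: W₂) U₁ (q :: U₂)
            (Sum.inl g₁) vp hU₁len.symm
            (by simp only [List.length_cons, List.length_nil]; omega) htriv (Sum.inl g₁)
            (by simp only [extD]; exact (h'.1 _ _).2 rfl)
            (le_of_eq (extD_symm h' _ _))
        have hl2' := hl2
        simp only [List.length_cons, List.length_nil] at hl2'
        obtain ⟨w', u', hl', hπw', hπu', hirr', hc'⟩ :=
          ih (W₁ ++ Sum.inl g₁ :: Sum.inl g₂ :: W₂) (U₁' ++ Sum.inl g₁ :: U₂')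
            (by simp only [List.length_append, List.length_cons, List.countP_append,
                  List.countP_cons, List.countP_nil] at hcnt ⊢
                simp at hMM hcnt ⊢
                omega)
            (by simp only [List.length_append, List.length_cons, List.length_nil]; omega) hπ
        exact ⟨w', u', hl', hπw', hπu', hirr', le_trans hc' hcost⟩
    · -- CASE B : cancelling X pair in w
      subst hb
      rcases p with α | vp
      · -- first u-letter is a G letter : replace w's pair by (α, α⁻¹)
        have hπw : wordProd (W₁ ++ Sum.inl α :: Sum.inl α⁻¹ :: W₂) =
            wordProd (W₁ ++ Sum.inr vz :: formalInv (Sum.inr vz) :: W₂) := by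
          rw [wordProd_middle_pair W₁ W₂ (Sum.inr vz)]
          have h5 := wordProd_middle_pair W₁ W₂ (Sum.inl α)
          simpa using h5
        have hcost : rho (extD d') (W₁ ++ Sum.inl α :: Sum.inl α⁻¹ :: W₂)
            (U₁ ++ Sum.inl α :: q :: U₂) ≤
            rho (extD d') (W₁ ++ Sum.inr vz :: formalInv (Sum.inr vz) :: W₂)
              (U₁ ++ Sum.inl α :: q :: U₂) := by
          rw [rho_append _ _ hU₁len.symm, rho_append _ _ hU₁len.symm,
            rho_cons, rho_cons, rho_cons, rho_cons]
          have t0 : extD d' (Sum.inl α) (Sum.inl α) = 0 := by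
            simp only [extD]; exact (h'.1 _ _).2 rfl
          have t1 : extD d' (Sum.inl α⁻¹) q ≤
              extD d' (Sum.inl α⁻¹) (Sum.inr vz.swap) + extD d' (Sum.inr vz.swap) q :=
            tri_midX h' hGinv hG hextG _ _ _
          have t2 : extD d' (Sum.inl α⁻¹) (Sum.inr vz.swap) =
              extD d' (Sum.inr vz) (Sum.inl α) := by
            have h5 := extD_fInv h' hGinv hG hextG (Sum.inl α) (Sum.inr vz)
            simp only [formalInv_inl, fInv_inr_swap] at h5
            rw [h5, extD_symm h']
          rw [fInv_inr_swap]
          linarith [t0, t1, t2]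
        obtain ⟨w', u', hl', hπw', hπu', hirr', hc'⟩ :=
          ih (W₁ ++ Sum.inl α :: Sum.inl α⁻¹ :: W₂) (U₁ ++ Sum.inl α :: q :: U₂)
            (by simp only [List.length_append, List.length_cons, List.countP_append,
                  List.countP_cons, List.countP_nil]
                simp at hMM ⊢
                omega)
            (by simp only [List.length_append, List.length_cons, List.length_nil]; omega) htriv
        exact ⟨w', u', hl', by rw [hπw', hπw], hπu', hirr', le_trans hc' hcost⟩
      · rcases q with β | vq
        · -- second u-letter is a G letter : replace w's pair by (β⁻¹, β)
          have hπw : wordProd (W₁ ++ Sum.inl β⁻¹ :: Sum.inl β :: W₂) =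
              wordProd (W₁ ++ Sum.inr vz :: formalInv (Sum.inr vz) :: W₂) := by
            rw [wordProd_middle_pair W₁ W₂ (Sum.inr vz)]
            have h5 := wordProd_middle_pair W₁ W₂ (Sum.inl β⁻¹)
            simpa using h5
          have hcost : rho (extD d') (W₁ ++ Sum.inl β⁻¹ :: Sum.inl β :: W₂)
              (U₁ ++ Sum.inr vp :: Sum.inl β :: U₂) ≤
              rho (extD d') (W₁ ++ Sum.inr vz :: formalInv (Sum.inr vz) :: W₂)
                (U₁ ++ Sum.inr vp :: Sum.inl β :: U₂) := by
            rw [rho_append _ _ hU₁len.symm, rho_append _ _ hU₁len.symm,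
              rho_cons, rho_cons, rho_cons, rho_cons]
            have t0 : extD d' (Sum.inl β) (Sum.inl β) = 0 := by
              simp only [extD]; exact (h'.1 _ _).2 rfl
            have t1 : extD d' (Sum.inl β⁻¹) (Sum.inr vp) ≤
                extD d' (Sum.inl β⁻¹) (Sum.inr vz) + extD d' (Sum.inr vz) (Sum.inr vp) :=
              tri_midX h' hGinv hG hextG _ _ _
            have t2 : extD d' (Sum.inl β⁻¹) (Sum.inr vz) =
                extD d' (Sum.inr vz.swap) (Sum.inl β) := by
              have h5 := extD_fInv h' hGinv hG hextG (Sum.inl β⁻¹) (Sum.inr vz)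
              simp only [formalInv_inl, fInv_inr_swap, inv_inv] at h5
              rw [← h5, extD_symm h']
            have t3 : extD d' (Sum.inr vz) (Sum.inr vp) =
                extD d' (Sum.inr vp) (Sum.inr vz) := extD_symm h' _ _
            rw [fInv_inr_swap]
            linarith [t0, t1, t2, t3]
          obtain ⟨w', u', hl', hπw', hπu', hirr', hc'⟩ :=
            ih (W₁ ++ Sum.inl β⁻¹ :: Sum.inl β :: W₂) (U₁ ++ Sum.inr vp :: Sum.inl β :: U₂)
              (by simp only [List.length_append, List.length_cons, List.countP_append,
                    List.countP_cons, List.countP_nil]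
                  simp at hMM ⊢
                  omega)
              (by simp only [List.length_append, List.length_cons, List.length_nil]; omega) htriv
          exact ⟨w', u', hl', by rw [hπw', hπw], hπu', hirr', le_trans hc' hcost⟩
        · -- COMPOSITE : both u-letters are X letters
          obtain ⟨U₁', U₂', m1l1, m1l2, m1π, m1cost, m1cnt, m1st⟩ :=
            M2gen h' hGinv hG hextG W₁ (formalInv (Sum.inr vz) :: W₂) U₁ (Sum.inr vq :: U₂)
              (Sum.inr vz) vp hU₁len.symm
              (by simp only [List.length_cons, List.length_nil]; omega) htriv (Sum.inr vz)
              (extD_self_X h' vz) (le_of_eq (extD_symm h' _ _))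
          have m1l2' := m1l2
          simp only [List.length_cons, List.length_nil] at m1l2'
          cases U₂' with
          | nil => simp at m1l2'
          | cons c Q =>
          have hc : ∃ vc, c = Sum.inr vc := by
            rcases m1st with ⟨hU₁'eq, V₁, V₂, hqU₂, hU₂'⟩ | ⟨hU₂'eq, _⟩
            · cases V₁ with
              | nil =>
                rw [List.nil_append] at hU₂'
                injection hU₂' with h1 _
                exact ⟨vz.swap, by rw [h1, fInv_inr_swap]⟩
              | cons e V₁' =>
                rw [List.cons_append] at hU₂' hqU₂
                injection hU₂' with h1 _
                injection hqU₂ with h2 _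
                exact ⟨vq, by rw [h1, ← h2]⟩
            · injection hU₂'eq with h1 _
              exact ⟨vq, h1⟩
          obtain ⟨vc, rfl⟩ := hc
          have htriv2 : wordProd ((U₁' ++ [Sum.inr vz]) ++ Sum.inr vc :: Q) = 1 := by
            have e : (U₁' ++ [Sum.inr vz]) ++ Sum.inr vc :: Q =
                U₁' ++ Sum.inr vz :: Sum.inr vc :: Q := by simp
            rw [e]; exact m1π
          obtain ⟨U₁'', U₂'', m2l1, m2l2, m2π, m2cost, m2cnt, m2st⟩ :=
            M2gen h' hGinv hG hextG (W₁ ++ [Sum.inr vz]) W₂ (U₁' ++ [Sum.inr vz]) Q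
              (formalInv (Sum.inr vz)) vc
              (by simp only [List.length_append, List.length_cons, List.length_nil]; omega)
              (by simp only [List.length_cons, List.length_nil] at m1l2; omega) htriv2
              (formalInv (Sum.inr vz))
              (by rw [fInv_inr_swap]; exact extD_self_X h' _)
              (le_of_eq (extD_symm h' _ _))
          have m2l1' := m2l1
          simp only [List.length_append, List.length_cons, List.length_nil] at m2l1'
          -- U₁'' ends with the letter `Sum.inr vz`
          have hU₁''last : ∃ D, U₁'' = D ++ [Sum.inr vz] ∧ D.length = U₁'.length := by
            rcases m2st with ⟨hU₁''eq, _⟩ | ⟨_, V₁, V₂, hsplit, hU₁''⟩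
            · exact ⟨U₁', hU₁''eq, rfl⟩
            · rw [formalInv_formalInv] at hU₁''
              rcases concat_eq hsplit with ⟨rfl, hLV, _⟩ | ⟨V₂', rfl⟩
              · refine ⟨V₁, hU₁'', ?_⟩
                rw [← hLV]
              · refine ⟨V₁ ++ Sum.inr vz :: V₂', ?_, ?_⟩
                · rw [hU₁'']; simp
                · have h7 := congrArg List.length hU₁''
                  simp only [List.length_append, List.length_cons, List.length_nil] at h7 ⊢
                  omega
          obtain ⟨D, hU₁''D, hDlen⟩ := hU₁''last
          -- final deletion of the cancelling pairs
          have hπu' : wordProd (D ++ U₂'') = 1 := by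
            have e2 : D ++ Sum.inr vz :: formalInv (Sum.inr vz) :: U₂'' =
                U₁'' ++ formalInv (Sum.inr vz) :: U₂'' := by rw [hU₁''D]; simp
            rw [← wordProd_middle_pair D U₂'' (Sum.inr vz), e2]
            exact m2π
          have hDW : W₁.length = D.length := by omega
          have hQW : W₂.length = U₂''.length := by
            simp only [List.length_cons, List.length_nil] at m1l2
            omega
          have costfin : rho (extD d') (W₁ ++ W₂) (D ++ U₂'') ≤
              rho (extD d') (W₁ ++ Sum.inr vz :: formalInv (Sum.inr vz) :: W₂)
                (U₁ ++ Sum.inr vp :: Sum.inr vq :: U₂) := by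
            have c3 : rho (extD d') (W₁ ++ Sum.inr vz :: formalInv (Sum.inr vz) :: W₂)
                (D ++ Sum.inr vz :: formalInv (Sum.inr vz) :: U₂'') =
                rho (extD d') W₁ D + rho (extD d') W₂ U₂'' := by
              rw [rho_append _ _ hDW, rho_cons, rho_cons, extD_self_X h' vz,
                fInv_inr_swap, extD_self_X h' vz.swap]
              ring
            have c4 : rho (extD d') (W₁ ++ W₂) (D ++ U₂'') =
                rho (extD d') W₁ D + rho (extD d') W₂ U₂'' := rho_append _ _ hDW
            have ew2 : (W₁ ++ [Sum.inr vz]) ++ formalInv (Sum.inr vz) :: W₂ =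
                W₁ ++ Sum.inr vz :: formalInv (Sum.inr vz) :: W₂ := by simp
            have eu2 : (U₁' ++ [Sum.inr vz]) ++ Sum.inr vc :: Q =
                U₁' ++ Sum.inr vz :: Sum.inr vc :: Q := by simp
            rw [ew2, eu2] at m2cost
            have eu3 : U₁'' ++ formalInv (Sum.inr vz) :: U₂'' =
                D ++ Sum.inr vz :: formalInv (Sum.inr vz) :: U₂'' := by
              rw [hU₁''D]; simp
            rw [eu3] at m2cost
            calc rho (extD d') (W₁ ++ W₂) (D ++ U₂'')
                = rho (extD d') W₁ D + rho (extD d') W₂ U₂'' := c4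
              _ = rho (extD d') (W₁ ++ Sum.inr vz :: formalInv (Sum.inr vz) :: W₂)
                    (D ++ Sum.inr vz :: formalInv (Sum.inr vz) :: U₂'') := c3.symm
              _ ≤ rho (extD d') (W₁ ++ Sum.inr vz :: formalInv (Sum.inr vz) :: W₂)
                    (U₁' ++ Sum.inr vz :: Sum.inr vc :: Q) := m2cost
              _ ≤ _ := m1cost
          have hcD := congrArg (List.countP Sum.isRight) hU₁''D
          simp only [List.countP_append, List.countP_cons, List.countP_nil] at hcD
          obtain ⟨w', u', hl', hπw', hπu'', hirr', hc'⟩ :=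
            ih (W₁ ++ W₂) (D ++ U₂'')
              (by simp only [List.length_append, List.length_cons, List.countP_append,
                    List.countP_cons, List.countP_nil] at m1cnt m2cnt ⊢
                  simp at hMM m1cnt m2cnt hcD ⊢
                  omega)
              (by simp only [List.length_append]; omega) hπu'
          refine ⟨w', u', hl', ?_, hπu'', hirr', le_trans hc' costfin⟩
          rw [hπw', ← wordProd_middle_pair W₁ W₂ (Sum.inr vz)]

end Main



section Repr
variable {G X : Type*} [Group G]

lemma exists_repr (g : FP G X) : ∃ w : List (Alphabet G X), wordProd w = g := by
  induction g using Coprod.induction_on with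
  | inl m => exact ⟨[Sum.inl m], by simp [wordProd, toFP]⟩
  | inr f =>
    induction f using FreeGroup.induction_on with
    | C1 => exact ⟨[], by simp [wordProd]⟩
    | of x => exact ⟨[Sum.inr (Sum.inl x)], by simp [wordProd, toFP]⟩
    | inv_of x _ => exact ⟨[Sum.inr (Sum.inr x)], by simp [wordProd, toFP]⟩
    | mul f₁ f₂ ih₁ ih₂ =>
      obtain ⟨w₁, hw₁⟩ := ih₁
      obtain ⟨w₂, hw₂⟩ := ih₂
      exact ⟨w₁ ++ w₂, by rw [wordProd_append, hw₁, hw₂, map_mul]⟩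
  | mul x y ihx ihy =>
    obtain ⟨w₁, hw₁⟩ := ihx
    obtain ⟨w₂, hw₂⟩ := ihy
    exact ⟨w₁ ++ w₂, by rw [wordProd_append, hw₁, hw₂]⟩

lemma wordProd_replicate_one (n : ℕ) :
    wordProd (List.replicate n (Sum.inl 1 : Alphabet G X)) = 1 := by
  induction n with
  | zero => rfl
  | succ n ihn =>
    rw [List.replicate_succ, wordProd_cons, ihn]
    simp [toFP]

end Repr


/-- Lemma 2. In computing `δ(g, 1)` one may restrict the word
representing `g` to be irreducible: `δ(g,1)` equals the infimum of `ρ(w,u)` over pairs of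
equal-length words with `w' = g`, `u' = 1` and `w` irreducible. -/
theorem graevDelta_irreducible_words {G X : Type*} [Group G]
    (dG : G → G → ℝ) (dX : X → X → ℝ) (d' : (G ⊕ X) → (G ⊕ X) → ℝ)
    (hG : IsMetricD dG) (hGinv : IsBiInvariant dG) (hX : IsMetricD dX)
    (h' : IsMetricD d')
    (hextG : ∀ g h : G, d' (Sum.inl g) (Sum.inl h) = dG g h)
    (hextX : ∀ x y : X, d' (Sum.inr x) (Sum.inr y) = dX x y)
    (hpos : ∀ x : X, ∃ ε > (0 : ℝ), ∀ g : G, ε ≤ d' (Sum.inl g) (Sum.inr x))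
    (g : FP G X) :
    graevDelta (extD d') g 1 =
      sInf { r | ∃ w u : List (Alphabet G X), w.length = u.length ∧
        wordProd w = g ∧ wordProd u = 1 ∧ IsIrreducibleWord w ∧
        r = rho (extD d') w u } := by
  classical
  unfold graevDelta
  set L : Set ℝ := { r | ∃ w₁ w₂ : List (Alphabet G X), w₁.length = w₂.length ∧
    wordProd w₁ = g ∧ wordProd w₂ = 1 ∧ r = rho (extD d') w₁ w₂ } with hLdef
  set R : Set ℝ := { r | ∃ w u : List (Alphabet G X), w.length = u.length ∧
    wordProd w = g ∧ wordProd u = 1 ∧ IsIrreducibleWord w ∧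
    r = rho (extD d') w u } with hRdef
  have hbL : BddBelow L := by
    refine ⟨0, fun r hr => ?_⟩
    obtain ⟨w, u, _, _, _, rfl⟩ := hr
    exact rho_nonneg (fun a b => extD_nonneg h' a b) w u
  have hbR : BddBelow R := by
    refine ⟨0, fun r hr => ?_⟩
    obtain ⟨w, u, _, _, _, _, rfl⟩ := hr
    exact rho_nonneg (fun a b => extD_nonneg h' a b) w u
  obtain ⟨w₀, hw₀⟩ := exists_repr (X := X) g
  have hLne : L.Nonempty := by
    refine ⟨rho (extD d') w₀ (List.replicate w₀.length (Sum.inl 1)), w₀,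
      List.replicate w₀.length (Sum.inl 1), ?_, hw₀, wordProd_replicate_one _, rfl⟩
    simp
  have key : ∀ r ∈ L, sInf R ≤ r := by
    rintro r ⟨w₁, w₂, hlen, hπ1, hπ2, rfl⟩
    obtain ⟨w', u', hl', hπw', hπu', hirr', hc'⟩ :=
      main_reduction h' hGinv hG hextG
        (w₁.length + w₂.length + List.countP Sum.isRight w₁ + List.countP Sum.isRight w₂)
        w₁ w₂ le_rfl hlen hπ2
    have hmem : rho (extD d') w' u' ∈ R :=
      ⟨w', u', hl', by rw [hπw', hπ1], hπu', hirr', rfl⟩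
    exact le_trans (csInf_le hbR hmem) hc'
  have hRne : R.Nonempty := by
    obtain ⟨w', u', hl', hπw', hπu', hirr', _⟩ :=
      main_reduction h' hGinv hG hextG
        (w₀.length + (List.replicate w₀.length (Sum.inl (1:G) : Alphabet G X)).length +
          List.countP Sum.isRight w₀ +
          List.countP Sum.isRight (List.replicate w₀.length (Sum.inl 1)))
        w₀ (List.replicate w₀.length (Sum.inl 1)) le_rfl (by simp)
        (wordProd_replicate_one _)
    exact ⟨rho (extD d') w' u', w', u', hl', by rw [hπw', hw₀], hπu', hirr', rfl⟩
  refine le_antisymm ?_ (le_csInf hLne key)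
  refine csInf_le_csInf hbL hRne ?_
  rintro r ⟨w, u, h1, h2, h3, _, h5⟩
  exact ⟨w, u, h1, h2, h3, h5⟩
end

section
/- In the setting of the finitely generated version of the construction (d_G finitely generated by the finite set A_G, X a finite metric space, d' a metric on A_G ⊔ X extending d_G restricted to A_G and d_X, and d'' the greatest amalgam metric on G ⊔ X over A_G, extended to d on S = G ⊔ X ⊔ X⁻¹ as in the Graev construction), define γ on G ∗ F(X) by γ(x,y) = inf{ d(x₁,y₁) + … + d(xₙ,yₙ) : n ∈ ℕ, x₁,y₁,…,xₙ,yₙ ∈ A_G ⊔ X ⊔ X⁻¹, x = x₁⋯xₙ, y = y₁⋯yₙ }. Then γ = δ, where δ(u,v) = inf{ ρ(u*,v*) : u*,v* words over S of equal length with (u*)' = u, (v*)' = v }; moreover the infimum in the definition of γ is attained, so δ is a finitely generated metric with generating set A_G ⊔ X ⊔ X⁻¹. -/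
open Monoid

/-- The greatest amalgam metric `d''` on `G ⊔ X` over `A_G`, extending `d_G` and `d'`. -/
noncomputable def amalgD {G X : Type*} [Group G] (dG : G → G → ℝ) (A : Set G)
    (d' : (↥A ⊕ X) → (↥A ⊕ X) → ℝ) : (G ⊕ X) → (G ⊕ X) → ℝ
  | Sum.inl g, Sum.inl h => dG g h
  | Sum.inr x, Sum.inr y => d' (Sum.inr x) (Sum.inr y)
  | Sum.inr x, Sum.inl g =>
      sInf { r | ∃ g₀ : A, r = d' (Sum.inr x) (Sum.inl g₀) + dG (g₀ : G) g }
  | Sum.inl g, Sum.inr x =>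
      sInf { r | ∃ g₀ : A, r = d' (Sum.inr x) (Sum.inl g₀) + dG (g₀ : G) g }

/-- The set of letters of the alphabet `S = G ⊔ X ⊔ X⁻¹` lying in `A_G ⊔ X ⊔ X⁻¹`. -/
def genSetS {G X : Type*} (A : Set G) : Set (Alphabet G X) :=
  { s | Sum.elim (fun g : G => g ∈ A) (fun _ => True) s }

/-- The finitely generated pre-metric `γ` on `G ∗ F(X)`: the infimum of `ρ` over pairs of
equal-length words whose letters come from `A_G ⊔ X ⊔ X⁻¹`. -/
noncomputable def gammaFG {G X : Type*} [Group G]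
    (d : Alphabet G X → Alphabet G X → ℝ) (A : Set G) (u v : FP G X) : ℝ :=
  sInf { r | ∃ l m : List (Alphabet G X), l.length = m.length ∧
    (∀ s ∈ l, s ∈ genSetS (X := X) A) ∧ (∀ s ∈ m, s ∈ genSetS (X := X) A) ∧
    wordProd l = u ∧ wordProd m = v ∧ r = rho d l m }

namespace GraevAux

open List

/-! ### Generic list lemmas -/

lemma sum_zipWith_nonneg {α : Type*} {d : α → α → ℝ} (h : ∀ a b, 0 ≤ d a b) :
    ∀ (l m : List α), 0 ≤ (List.zipWith d l m).sum
  | [], _ => by simp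
  | _ :: _, [] => by simp
  | a :: l, b :: m => by
    simp only [List.zipWith_cons_cons, List.sum_cons]
    have := sum_zipWith_nonneg h l m
    have := h a b
    linarith

lemma sum_zipWith_le {α : Type*} {f g : α → α → ℝ} (h : ∀ a b, f a b ≤ g a b) :
    ∀ (l m : List α), (List.zipWith f l m).sum ≤ (List.zipWith g l m).sum
  | [], _ => by simp
  | _ :: _, [] => by simp
  | a :: l, b :: m => by
    simp only [List.zipWith_cons_cons, List.sum_cons]
    have := sum_zipWith_le h l m
    have := h a b
    linarith

lemma sum_zipWith_self {α : Type*} {d : α → α → ℝ} (h : ∀ a, d a a = 0) :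
    ∀ (l : List α), (List.zipWith d l l).sum = 0
  | [] => by simp
  | a :: l => by
    simp only [List.zipWith_cons_cons, List.sum_cons, h a, sum_zipWith_self h l, add_zero]

lemma mem_zipWith {α β : Type*} {f : α → α → β} :
    ∀ {l m : List α} {x : β}, x ∈ List.zipWith f l m → ∃ a ∈ l, ∃ b ∈ m, x = f a b
  | [], _, _, hx => by simp at hx
  | _ :: _, [], _, hx => by simp at hx
  | a :: l, b :: m, x, hx => by
    simp only [List.zipWith_cons_cons, List.mem_cons] at hx
    rcases hx with rfl | hx
    · exact ⟨a, by simp, b, by simp, rfl⟩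
    · obtain ⟨a', ha', b', hb', rfl⟩ := mem_zipWith hx
      exact ⟨a', by simp [ha'], b', by simp [hb'], rfl⟩

lemma zipWith_eq_of_sum_eq_zero {α : Type*} {d : α → α → ℝ} (h0 : ∀ a b, 0 ≤ d a b) :
    ∀ (l m : List α), (∀ a ∈ l, ∀ b ∈ m, d a b = 0 → a = b) →
      l.length = m.length → (List.zipWith d l m).sum = 0 → l = m
  | [], [], _, _, _ => rfl
  | [], _ :: _, _, h, _ => by simp at h
  | _ :: _, [], _, h, _ => by simp at h
  | a :: l, b :: m, hpos, hlen, hsum => by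
    simp only [List.zipWith_cons_cons, List.sum_cons] at hsum
    have h1 := h0 a b
    have h2 := sum_zipWith_nonneg h0 l m
    have hab : d a b = 0 := by linarith
    have hrest : (List.zipWith d l m).sum = 0 := by linarith
    rw [hpos a (by simp) b (by simp) hab,
      zipWith_eq_of_sum_eq_zero h0 l m
        (fun a' ha' b' hb' => hpos a' (by simp [ha']) b' (by simp [hb']))
        (by simpa using hlen) hrest]

end GraevAux
namespace GraevAux

section
variable {G X : Type*} [Group G]

lemma wordProd_nil : wordProd ([] : List (Alphabet G X)) = 1 := rfl

lemma wordProd_cons (a : Alphabet G X) (l : List (Alphabet G X)) :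
    wordProd (a :: l) = toFP a * wordProd l := by simp [wordProd]

lemma wordProd_append (l m : List (Alphabet G X)) :
    wordProd (l ++ m) = wordProd l * wordProd m := by simp [wordProd]

lemma toFP_formalInv (a : Alphabet G X) : toFP (formalInv a) = (toFP a)⁻¹ := by
  rcases a with g | x | x
  · simp [toFP, formalInv]
  · rfl
  · simp [toFP, formalInv]

lemma formalInv_formalInv (a : Alphabet G X) : formalInv (formalInv a) = a := by
  rcases a with g | x | x <;> simp [formalInv]

lemma wordProd_invWord (l : List (Alphabet G X)) :
    wordProd (l.reverse.map formalInv) = (wordProd l)⁻¹ := by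
  induction l with
  | nil => simp [wordProd]
  | cons a l ih =>
    rw [wordProd_cons, List.reverse_cons, List.map_append, wordProd_append, ih]
    simp [wordProd, toFP_formalInv]

lemma wordProd_map_inl (l : List G) :
    wordProd (l.map (Sum.inl : G → Alphabet G X)) = Coprod.inl l.prod := by
  rw [MonoidHom.map_list_prod, wordProd, List.map_map]
  rfl

lemma rho_nil {α : Type*} (d : α → α → ℝ) (m : List α) : rho d [] m = 0 := by simp [rho]

lemma rho_cons {α : Type*} (d : α → α → ℝ) (a b : α) (l m : List α) :
    rho d (a :: l) (b :: m) = d a b + rho d l m := by simp [rho]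

lemma rho_append {α : Type*} (d : α → α → ℝ) {l₁ m₁ : List α} (l₂ m₂ : List α)
    (h : l₁.length = m₁.length) :
    rho d (l₁ ++ l₂) (m₁ ++ m₂) = rho d l₁ m₁ + rho d l₂ m₂ := by
  unfold rho
  rw [List.zipWith_append h, List.sum_append]

lemma rho_self {α : Type*} {d : α → α → ℝ} (h : ∀ a, d a a = 0) (l : List α) :
    rho d l l = 0 := sum_zipWith_self h l

lemma rho_symm {α : Type*} {d : α → α → ℝ} (h : ∀ a b, d a b = d b a) :
    ∀ (l m : List α), rho d l m = rho d m l
  | [], m => by cases m <;> simp [rho]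
  | _ :: _, [] => by simp [rho]
  | a :: l, b :: m => by rw [rho_cons, rho_cons, h a b, rho_symm h l m]

end

end GraevAux
namespace GraevAux

lemma sum_filter_pos : ∀ (L : List ℝ), (∀ a ∈ L, 0 < a ∨ a = 0) →
    (L.filter (fun a => 0 < a)).sum = L.sum
  | [], _ => rfl
  | a :: L, h => by
    have hL := sum_filter_pos L (fun b hb => h b (List.mem_cons_of_mem _ hb))
    rcases h a (List.mem_cons_self) with ha | ha
    · rw [List.filter_cons_of_pos (by simpa using ha), List.sum_cons, List.sum_cons, hL]
    · rw [List.filter_cons_of_neg (by simp [ha]), List.sum_cons, hL, ha, zero_add]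

lemma length_le_of_sum {L : List ℝ} {ε B : ℝ} (hε : 0 < ε) (h : ∀ a ∈ L, ε ≤ a)
    (hB : L.sum ≤ B) : (L.length : ℝ) ≤ B / ε := by
  have := List.card_nsmul_le_sum L ε h
  rw [nsmul_eq_mul] at this
  rw [le_div_iff₀ hε]
  linarith

/-- Attainment: the infimum of a nonempty set of finite sums of elements drawn
from a finite set of nonnegative reals is attained. -/
lemma isLeast_sInf_of_sums {D : Set ℝ} (hD : D.Finite) (hD0 : ∀ x ∈ D, 0 ≤ x)
    {T : Set ℝ} (hT : T.Nonempty)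
    (hsub : ∀ r ∈ T, ∃ L : List ℝ, (∀ a ∈ L, a ∈ D) ∧ r = L.sum) :
    IsLeast T (sInf T) := by
  obtain ⟨r₀, hr₀⟩ := hT
  set T' := T ∩ Set.Iic r₀ with hT'def
  set P : Set ℝ := {x ∈ D | 0 < x} with hPdef
  have hPfin : P.Finite := hD.subset (fun x hx => hx.1)
  have hT'fin : T'.Finite := by
    rcases P.eq_empty_or_nonempty with hP | hP
    · refine (Set.finite_singleton 0).subset ?_
      rintro r ⟨hrT, -⟩
      obtain ⟨L, hL, rfl⟩ := hsub r hrT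
      have : ∀ a ∈ L, a = 0 := by
        intro a ha
        by_contra hne
        have : a ∈ P := ⟨hL a ha, lt_of_le_of_ne (hD0 a (hL a ha)) (Ne.symm hne)⟩
        simp [hP] at this
      simp [List.sum_eq_zero this]
    · haveI : Finite ↥P := hPfin
      set ε : ℝ := sInf P with hεdef
      have hεP : ε ∈ P := hP.csInf_mem hPfin
      have hε : 0 < ε := hεP.2
      set N : ℕ := ⌈r₀ / ε⌉₊ with hNdef
      have : T' ⊆ (fun L : List {x : ℝ // x ∈ P} => (L.map Subtype.val).sum) ''
          {L | L.length ≤ N} := by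
        rintro r ⟨hrT, hrle⟩
        obtain ⟨L, hL, rfl⟩ := hsub r hrT
        set L' : List ℝ := L.filter (fun a => 0 < a) with hL'def
        have hmemL' : ∀ a ∈ L', a ∈ P := by
          intro a ha
          rw [hL'def, List.mem_filter] at ha
          exact ⟨hL a ha.1, by simpa using ha.2⟩
        have hsum : L'.sum = L.sum := by
          apply sum_filter_pos
          intro a ha
          rcases (lt_or_eq_of_le (hD0 a (hL a ha))) with h | h
          · exact Or.inl h
          · exact Or.inr h.symm
        have hlen : L'.length ≤ N := by
          have h1 : ∀ a ∈ L', ε ≤ a := fun a ha => csInf_le hPfin.bddBelow (hmemL' a ha)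
          have h2 : (L'.length : ℝ) ≤ r₀ / ε :=
            length_le_of_sum hε h1 (by rw [hsum]; exact hrle)
          have h3 : (r₀ / ε) ≤ (N : ℝ) := Nat.le_ceil _
          exact_mod_cast le_trans h2 h3
        refine ⟨L'.attach.map (fun a => ⟨a.1, hmemL' a.1 a.2⟩), by simpa using hlen, ?_⟩
        simp only [List.map_map]
        have heq : List.map (Subtype.val ∘ fun a : {x // x ∈ L'} =>
            (⟨a.1, hmemL' a.1 a.2⟩ : {x : ℝ // x ∈ P})) L'.attach = L' := by
          simp [Function.comp_def]
        rw [heq, hsum]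
      exact (((List.finite_length_le _ N).image _).subset this)
  have hT'ne : T'.Nonempty := ⟨r₀, hr₀, le_refl r₀⟩
  have hm : sInf T' ∈ T' := hT'ne.csInf_mem hT'fin
  have hleast : IsLeast T (sInf T') := by
    refine ⟨hm.1, fun t ht => ?_⟩
    by_cases hcase : t ≤ r₀
    · exact csInf_le hT'fin.bddBelow ⟨ht, hcase⟩
    · exact le_trans hm.2 (le_of_not_ge hcase)
  rw [hleast.csInf_eq]
  exact hleast

end GraevAux
namespace GraevAux

lemma dm_refl {α : Type*} {d : α → α → ℝ} (h : IsMetricD d) (x : α) : d x x = 0 :=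
  (h.1 x x).2 rfl

lemma dm_nonneg {α : Type*} {d : α → α → ℝ} (h : IsMetricD d) (x y : α) : 0 ≤ d x y := by
  have h1 := h.2.2 x y x
  rw [dm_refl h x, h.2.1 y x] at h1
  linarith

lemma dm_pos {α : Type*} {d : α → α → ℝ} (h : IsMetricD d) {x y : α} (hxy : x ≠ y) :
    0 < d x y :=
  lt_of_le_of_ne (dm_nonneg h x y) (fun h0 => hxy ((h.1 x y).1 h0.symm))

/-- `IsLeast` for elements of the finite range `{r | ∃ j, r = f j}`. -/
lemma isLeast_sInf_range {ι : Sort*} [Nonempty ι] [Finite ι] (f : ι → ℝ) :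
    IsLeast {r | ∃ j, r = f j} (sInf {r | ∃ j, r = f j}) := by
  have h : {r | ∃ j, r = f j} = Set.range f := by
    ext r; simp [Set.range, eq_comm]
  rw [h]
  exact ⟨(Set.range_nonempty f).csInf_mem (Set.finite_range f),
    fun r hr => csInf_le (Set.finite_range f).bddBelow hr⟩

section FinGen
variable {G : Type*} [Group G] {dG : G → G → ℝ} {A : Set G}

lemma fg_mem (hfg : IsFinGenMetric dG A) (a b : G) :
    ∃ l m : List G, l.length = m.length ∧ (∀ x ∈ l, x ∈ A) ∧ (∀ y ∈ m, y ∈ A) ∧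
      l.prod = a ∧ m.prod = b ∧ dG a b = (List.zipWith dG l m).sum :=
  (hfg.2.2.2 a b).1

lemma fg_le (hfg : IsFinGenMetric dG A) {a b : G} {l m : List G} (hlen : l.length = m.length)
    (hl : ∀ x ∈ l, x ∈ A) (hm : ∀ y ∈ m, y ∈ A) (hpl : l.prod = a) (hpm : m.prod = b) :
    dG a b ≤ (List.zipWith dG l m).sum :=
  (hfg.2.2.2 a b).2 ⟨l, m, hlen, hl, hm, hpl, hpm, rfl⟩

lemma dG_left_le (hG : IsMetricD dG) (hfg : IsFinGenMetric dG A) (a x y : G) :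
    dG (a * x) (a * y) ≤ dG x y := by
  obtain ⟨l, m, hlen, hl, hm, hpl, hpm, hsum⟩ := fg_mem hfg x y
  obtain ⟨la, ma, halen, hal, ham, hapl, hapm, hasum⟩ := fg_mem hfg a a
  have h0 : (List.zipWith dG la ma).sum = 0 := by rw [← hasum, dm_refl hG]
  have := fg_le hfg (a := a * x) (b := a * y) (l := la ++ l) (m := ma ++ m)
    (by simp [halen, hlen])
    (by simp only [List.mem_append]; rintro z (h | h); exacts [hal z h, hl z h])
    (by simp only [List.mem_append]; rintro z (h | h); exacts [ham z h, hm z h])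
    (by rw [List.prod_append, hapl, hpl]) (by rw [List.prod_append, hapm, hpm])
  rwa [List.zipWith_append halen, List.sum_append, h0, zero_add, ← hsum] at this

lemma dG_left_inv (hG : IsMetricD dG) (hfg : IsFinGenMetric dG A) (a x y : G) :
    dG (a * x) (a * y) = dG x y := by
  refine le_antisymm (dG_left_le hG hfg a x y) ?_
  have := dG_left_le hG hfg a⁻¹ (a * x) (a * y)
  simpa using this

lemma dG_right_le (hG : IsMetricD dG) (hfg : IsFinGenMetric dG A) (a x y : G) :
    dG (x * a) (y * a) ≤ dG x y := by
  obtain ⟨l, m, hlen, hl, hm, hpl, hpm, hsum⟩ := fg_mem hfg x y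
  obtain ⟨la, ma, halen, hal, ham, hapl, hapm, hasum⟩ := fg_mem hfg a a
  have h0 : (List.zipWith dG la ma).sum = 0 := by rw [← hasum, dm_refl hG]
  have := fg_le hfg (a := x * a) (b := y * a) (l := l ++ la) (m := m ++ ma)
    (by simp [halen, hlen])
    (by simp only [List.mem_append]; rintro z (h | h); exacts [hl z h, hal z h])
    (by simp only [List.mem_append]; rintro z (h | h); exacts [hm z h, ham z h])
    (by rw [List.prod_append, hapl, hpl]) (by rw [List.prod_append, hapm, hpm])
  rwa [List.zipWith_append hlen, List.sum_append, h0, add_zero, ← hsum] at this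

lemma dG_right_inv (hG : IsMetricD dG) (hfg : IsFinGenMetric dG A) (a x y : G) :
    dG (x * a) (y * a) = dG x y := by
  refine le_antisymm (dG_right_le hG hfg a x y) ?_
  have := dG_right_le hG hfg a⁻¹ (x * a) (y * a)
  simpa using this

lemma dG_inv_inv (hG : IsMetricD dG) (hfg : IsFinGenMetric dG A) (a b : G) :
    dG a⁻¹ b⁻¹ = dG a b := by
  have h1 : dG a⁻¹ b⁻¹ = dG 1 (b⁻¹ * a) := by
    have := dG_right_inv hG hfg a a⁻¹ b⁻¹
    simpa using this.symm
  have h2 : dG b a = dG 1 (b⁻¹ * a) := by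
    have := dG_left_inv hG hfg b 1 (b⁻¹ * a)
    simpa using this
  rw [h1, ← h2, hG.2.1]

end FinGen

end GraevAux
namespace GraevAux

section DS
variable {G X : Type*} [Group G] [Fintype X]

/-- The defining set of the mixed amalgam distance. -/
def aset (dG : G → G → ℝ) (A : Set G) (d' : (↥A ⊕ X) → (↥A ⊕ X) → ℝ) (g : G) (x : X) :
    Set ℝ := {r | ∃ g₀ : A, r = d' (Sum.inr x) (Sum.inl g₀) + dG (g₀ : G) g}

/-- Distances from `x ∈ X` to the generating set. -/
def eset (A : Set G) (d' : (↥A ⊕ X) → (↥A ⊕ X) → ℝ) (x : X) : Set ℝ :=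
  {r | ∃ g₀ : A, r = d' (Sum.inr x) (Sum.inl g₀)}

variable {dG : G → G → ℝ} {A : Set G} {d' : (↥A ⊕ X) → (↥A ⊕ X) → ℝ}
variable (hG : IsMetricD dG) (hfg : IsFinGenMetric dG A) (h' : IsMetricD d')

set_option linter.unusedSectionVars false

include hG hfg h'

lemma aset_least (g : G) (x : X) :
    IsLeast (aset dG A d' g x) (sInf (aset dG A d' g x)) := by
  haveI : Finite ↥A := hfg.1.to_subtype
  haveI : Nonempty ↥A := ⟨⟨1, hfg.2.1⟩⟩
  exact isLeast_sInf_range _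

lemma eset_least (x : X) : IsLeast (eset A d' x) (sInf (eset A d' x)) := by
  haveI : Finite ↥A := hfg.1.to_subtype
  haveI : Nonempty ↥A := ⟨⟨1, hfg.2.1⟩⟩
  exact isLeast_sInf_range _

lemma eset_pos (x : X) : 0 < sInf (eset A d' x) := by
  obtain ⟨g₀, hg₀⟩ := (eset_least hG hfg h' x).1
  rw [hg₀]
  exact dm_pos h' (by simp)

lemma sInf_eset_le_sInf_aset (g : G) (x : X) :
    sInf (eset A d' x) ≤ sInf (aset dG A d' g x) := by
  obtain ⟨g₀, hg₀⟩ := (aset_least hG hfg h' g x).1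
  rw [hg₀]
  have h1 := (eset_least hG hfg h' x).2 ⟨g₀, rfl⟩
  have h2 := dm_nonneg hG (g₀ : G) g
  linarith

lemma aset_pos (g : G) (x : X) : 0 < sInf (aset dG A d' g x) :=
  lt_of_lt_of_le (eset_pos hG hfg h' x) (sInf_eset_le_sInf_aset hG hfg h' g x)

lemma aset_nonneg (g : G) (x : X) : 0 ≤ sInf (aset dG A d' g x) :=
  le_of_lt (aset_pos hG hfg h' g x)

lemma aset_le (g : G) (x : X) (g₀ : A) :
    sInf (aset dG A d' g x) ≤ d' (Sum.inr x) (Sum.inl g₀) + dG (g₀ : G) g :=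
  (aset_least hG hfg h' g x).2 ⟨g₀, rfl⟩

omit hG hfg h' in lemma dS_inl_inl (g h : G) :
    extD (amalgD dG A d') (Sum.inl g) (Sum.inl h) = dG g h := rfl

omit hG hfg h' in lemma dS_inl_x (g : G) (x : X) :
    extD (amalgD dG A d') (Sum.inl g) (Sum.inr (Sum.inl x)) = sInf (aset dG A d' g x) := rfl

omit hG hfg h' in lemma dS_x_inl (g : G) (x : X) :
    extD (amalgD dG A d') (Sum.inr (Sum.inl x)) (Sum.inl g) = sInf (aset dG A d' g x) := rfl

omit hG hfg h' in lemma dS_inl_xinv (g : G) (x : X) :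
    extD (amalgD dG A d') (Sum.inl g) (Sum.inr (Sum.inr x)) = sInf (aset dG A d' g⁻¹ x) := rfl

omit hG hfg h' in lemma dS_xinv_inl (g : G) (x : X) :
    extD (amalgD dG A d') (Sum.inr (Sum.inr x)) (Sum.inl g) = sInf (aset dG A d' g⁻¹ x) := rfl

omit hG hfg h' in lemma dS_x_x (x y : X) :
    extD (amalgD dG A d') (Sum.inr (Sum.inl x)) (Sum.inr (Sum.inl y)) =
      d' (Sum.inr x) (Sum.inr y) := rfl

omit hG hfg h' in lemma dS_xinv_xinv (x y : X) :
    extD (amalgD dG A d') (Sum.inr (Sum.inr x)) (Sum.inr (Sum.inr y)) =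
      d' (Sum.inr x) (Sum.inr y) := rfl

omit hG hfg h' in lemma dS_x_xinv (x y : X) :
    extD (amalgD dG A d') (Sum.inr (Sum.inl x)) (Sum.inr (Sum.inr y)) =
      sInf { r | ∃ c : G, r = sInf (aset dG A d' c x) + sInf (aset dG A d' c⁻¹ y) } := rfl

omit hG hfg h' in lemma dS_xinv_x (x y : X) :
    extD (amalgD dG A d') (Sum.inr (Sum.inr y)) (Sum.inr (Sum.inl x)) =
      sInf { r | ∃ c : G, r = sInf (aset dG A d' c x) + sInf (aset dG A d' c⁻¹ y) } := rfl

lemma mixset_pos (x y : X) :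
    0 < sInf { r | ∃ c : G, r = sInf (aset dG A d' c x) + sInf (aset dG A d' c⁻¹ y) } := by
  refine lt_of_lt_of_le (show (0:ℝ) < sInf (eset A d' x) + sInf (eset A d' y) by
    have := eset_pos hG hfg h' x; have := eset_pos hG hfg h' y; linarith) ?_
  refine le_csInf ⟨_, ⟨1, rfl⟩⟩ ?_
  rintro r ⟨c, rfl⟩
  have h1 := sInf_eset_le_sInf_aset hG hfg h' c x
  have h2 := sInf_eset_le_sInf_aset hG hfg h' c⁻¹ y
  linarith

lemma dS_symm (s t : Alphabet G X) :
    extD (amalgD dG A d') s t = extD (amalgD dG A d') t s := by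
  rcases s with g | x | x <;> rcases t with h | y | y
  · exact hG.2.1 g h
  · rfl
  · rfl
  · rfl
  · exact h'.2.1 _ _
  · rfl
  · rfl
  · rfl
  · exact h'.2.1 _ _

lemma dS_self (s : Alphabet G X) : extD (amalgD dG A d') s s = 0 := by
  rcases s with g | x | x
  · exact dm_refl hG g
  · exact dm_refl h' _
  · exact dm_refl h' _

lemma dS_nonneg (s t : Alphabet G X) : 0 ≤ extD (amalgD dG A d') s t := by
  rcases s with g | x | x <;> rcases t with h | y | y
  · exact dm_nonneg hG g h
  · exact aset_nonneg hG hfg h' _ _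
  · exact aset_nonneg hG hfg h' _ _
  · exact aset_nonneg hG hfg h' _ _
  · exact dm_nonneg h' _ _
  · rw [dS_x_xinv]
    refine Real.sInf_nonneg ?_
    rintro r ⟨c, rfl⟩
    have := aset_nonneg hG hfg h' c x
    have := aset_nonneg hG hfg h' c⁻¹ y
    linarith
  · exact aset_nonneg hG hfg h' _ _
  · rw [dS_xinv_x]
    refine Real.sInf_nonneg ?_
    rintro r ⟨c, rfl⟩
    have := aset_nonneg hG hfg h' c y
    have := aset_nonneg hG hfg h' c⁻¹ x
    linarith
  · exact dm_nonneg h' _ _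

end DS

end GraevAux
namespace GraevAux

section DS2
variable {G X : Type*} [Group G] [Fintype X]
variable {dG : G → G → ℝ} {A : Set G} {d' : (↥A ⊕ X) → (↥A ⊕ X) → ℝ}
variable (hG : IsMetricD dG) (hfg : IsFinGenMetric dG A) (h' : IsMetricD d')

set_option linter.unusedSectionVars false

lemma mem_genSet_inl {g : G} : (Sum.inl g : Alphabet G X) ∈ genSetS (X := X) A ↔ g ∈ A :=
  Iff.rfl

lemma mem_genSet_inr (t : X ⊕ X) : (Sum.inr t : Alphabet G X) ∈ genSetS (X := X) A := by
  cases t <;> trivial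

include hG hfg h' in
lemma dS_pos_gen {s t : Alphabet G X} (hs : s ∈ genSetS (X := X) A)
    (ht : t ∈ genSetS (X := X) A) (h0 : extD (amalgD dG A d') s t = 0) : s = t := by
  rcases s with g | x | x <;> rcases t with h | y | y
  · exact congrArg Sum.inl ((hG.1 g h).1 h0)
  · exact absurd h0 (aset_pos hG hfg h' g y).ne'
  · exact absurd h0 (aset_pos hG hfg h' g⁻¹ y).ne'
  · exact absurd h0 (aset_pos hG hfg h' h x).ne'
  · have := (h'.1 (Sum.inr x) (Sum.inr y)).1 h0
    rw [Sum.inr.injEq] at this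
    rw [this]
  · exact absurd h0 (mixset_pos hG hfg h' x y).ne'
  · exact absurd h0 (aset_pos hG hfg h' h⁻¹ x).ne'
  · exact absurd h0 (mixset_pos hG hfg h' y x).ne'
  · have := (h'.1 (Sum.inr x) (Sum.inr y)).1 h0
    rw [Sum.inr.injEq] at this
    rw [this]

include hfg in
lemma exists_word (u : FP G X) :
    ∃ l : List (Alphabet G X), (∀ s ∈ l, s ∈ genSetS (X := X) A) ∧ wordProd l = u := by
  induction u using Coprod.induction_on with
  | inl g =>
    obtain ⟨l, m, _, hl, _, hpl, _, _⟩ := fg_mem hfg g 1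
    refine ⟨l.map Sum.inl, ?_, by rw [wordProd_map_inl, hpl]⟩
    intro s hs
    obtain ⟨a, ha, rfl⟩ := List.mem_map.1 hs
    exact hl a ha
  | inr w =>
    induction w using FreeGroup.induction_on with
    | C1 => exact ⟨[], by simp, by simp [wordProd]⟩
    | of x =>
      refine ⟨[Sum.inr (Sum.inl x)], ?_, ?_⟩
      · rintro s hs
        simp only [List.mem_singleton] at hs
        subst hs
        exact mem_genSet_inr _
      · simp only [wordProd, List.map_cons, List.map_nil, List.prod_cons, List.prod_nil,
          mul_one]
        rfl
    | inv_of x _ =>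
      refine ⟨[Sum.inr (Sum.inr x)], ?_, ?_⟩
      · rintro s hs
        simp only [List.mem_singleton] at hs
        subst hs
        exact mem_genSet_inr _
      · simp only [wordProd, List.map_cons, List.map_nil, List.prod_cons, List.prod_nil,
          mul_one]
        rfl
    | mul x y ihx ihy =>
      obtain ⟨l₁, h₁, hp₁⟩ := ihx
      obtain ⟨l₂, h₂, hp₂⟩ := ihy
      refine ⟨l₁ ++ l₂, ?_, by rw [wordProd_append, hp₁, hp₂, map_mul]⟩
      simp only [List.mem_append]
      rintro s (h | h)
      exacts [h₁ s h, h₂ s h]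
  | mul x y ihx ihy =>
    obtain ⟨l₁, h₁, hp₁⟩ := ihx
    obtain ⟨l₂, h₂, hp₂⟩ := ihy
    refine ⟨l₁ ++ l₂, ?_, by rw [wordProd_append, hp₁, hp₂]⟩
    simp only [List.mem_append]
    rintro s (h | h)
    exacts [h₁ s h, h₂ s h]

end DS2

end GraevAux
namespace GraevAux

section WSet
variable {G X : Type*} [Group G] [Fintype X]

/-- The set of word-pair sums defining the infimum, with letters restricted to `P`. -/
def wSet (d : Alphabet G X → Alphabet G X → ℝ) (P : Set (Alphabet G X)) (u v : FP G X) :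
    Set ℝ :=
  { r | ∃ l m : List (Alphabet G X), l.length = m.length ∧ (∀ s ∈ l, s ∈ P) ∧
      (∀ s ∈ m, s ∈ P) ∧ wordProd l = u ∧ wordProd m = v ∧ r = rho d l m }

lemma gammaFG_eq_wSet (d : Alphabet G X → Alphabet G X → ℝ) (A : Set G) (u v : FP G X) :
    gammaFG d A u v = sInf (wSet d (genSetS A) u v) := rfl

lemma graevDelta_eq_wSet (d : Alphabet G X → Alphabet G X → ℝ) (u v : FP G X) :
    graevDelta d u v = sInf (wSet d Set.univ u v) := by
  unfold graevDelta wSet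
  congr 1
  ext r
  constructor
  · rintro ⟨l, m, h1, h4, h5, h6⟩
    exact ⟨l, m, h1, by simp, by simp, h4, h5, h6⟩
  · rintro ⟨l, m, h1, -, -, h4, h5, h6⟩
    exact ⟨l, m, h1, h4, h5, h6⟩

variable {d : Alphabet G X → Alphabet G X → ℝ} {P : Set (Alphabet G X)}

lemma wSet_bddBelow (hd0 : ∀ a b, 0 ≤ d a b) (u v : FP G X) : BddBelow (wSet d P u v) := by
  refine ⟨0, ?_⟩
  rintro r ⟨l, m, -, -, -, -, -, rfl⟩
  exact sum_zipWith_nonneg hd0 l m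

lemma wordProd_replicate_one (k : ℕ) :
    wordProd (List.replicate k (Sum.inl (1 : G)) : List (Alphabet G X)) = 1 := by
  induction k with
  | zero => rfl
  | succ n ih =>
    rw [List.replicate_succ, wordProd_cons, ih, mul_one]
    show Coprod.inl (1 : G) = 1
    exact map_one _

lemma wSet_nonempty {dG : G → G → ℝ} {A : Set G} (hfg : IsFinGenMetric dG A)
    (hP : genSetS (X := X) A ⊆ P) (u v : FP G X) : (wSet d P u v).Nonempty := by
  obtain ⟨l, hl, hpl⟩ := exists_word (A := A) hfg u
  obtain ⟨m, hm, hpm⟩ := exists_word (A := A) hfg v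
  have h1 : (Sum.inl (1 : G) : Alphabet G X) ∈ genSetS (X := X) A :=
    (mem_genSet_inl (A := A)).2 hfg.2.1
  refine ⟨_, l ++ List.replicate m.length (Sum.inl 1),
    List.replicate l.length (Sum.inl 1) ++ m, by simp [add_comm], ?_, ?_, ?_, ?_, rfl⟩
  · simp only [List.mem_append]
    rintro s (h | h)
    · exact hP (hl s h)
    · rw [List.eq_of_mem_replicate h]; exact hP h1
  · simp only [List.mem_append]
    rintro s (h | h)
    · rw [List.eq_of_mem_replicate h]; exact hP h1
    · exact hP (hm s h)
  · rw [wordProd_append, wordProd_replicate_one, hpl, mul_one]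
  · rw [wordProd_append, wordProd_replicate_one, hpm, one_mul]

lemma sInf_wSet_mul (hd0 : ∀ a b, 0 ≤ d a b) {u v u' v' : FP G X}
    (h1 : (wSet d P u v).Nonempty) (h2 : (wSet d P u' v').Nonempty) :
    sInf (wSet d P (u * u') (v * v')) ≤ sInf (wSet d P u v) + sInf (wSet d P u' v') := by
  have key : ∀ a ∈ wSet d P u v, ∀ b ∈ wSet d P u' v',
      sInf (wSet d P (u * u') (v * v')) ≤ a + b := by
    rintro a ⟨l, m, hlen, hl, hm, hpu, hpv, rfl⟩ b ⟨l', m', hlen', hl', hm', hpu', hpv', rfl⟩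
    refine csInf_le (wSet_bddBelow hd0 _ _) ⟨l ++ l', m ++ m', by simp [hlen, hlen'], ?_, ?_,
      by rw [wordProd_append, hpu, hpu'], by rw [wordProd_append, hpv, hpv'],
      (rho_append d l' m' hlen).symm⟩
    · simp only [List.mem_append]; rintro s (h | h); exacts [hl s h, hl' s h]
    · simp only [List.mem_append]; rintro s (h | h); exacts [hm s h, hm' s h]
  rw [← sub_le_iff_le_add']
  refine le_csInf h2 (fun b hb => ?_)
  rw [sub_le_iff_le_add, ← sub_le_iff_le_add']
  refine le_csInf h1 (fun a ha => ?_)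
  have := key a ha b hb
  linarith

lemma sInf_wSet_one (hd0 : ∀ a b, 0 ≤ d a b) : sInf (wSet d P (1 : FP G X) 1) ≤ 0 :=
  csInf_le (wSet_bddBelow hd0 _ _) ⟨[], [], rfl, by simp, by simp, rfl, rfl, rfl⟩

lemma sInf_wSet_prod (hd0 : ∀ a b, 0 ≤ d a b)
    (hne : ∀ u v : FP G X, (wSet d P u v).Nonempty) :
    ∀ l m : List (Alphabet G X), l.length = m.length →
      sInf (wSet d P (wordProd l) (wordProd m)) ≤
        (List.zipWith (fun a b => sInf (wSet d P (toFP a) (toFP b))) l m).sum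
  | [], [], _ => by simpa [wordProd] using sInf_wSet_one hd0
  | [], _ :: _, h => by simp at h
  | _ :: _, [], h => by simp at h
  | a :: l, b :: m, h => by
    rw [wordProd_cons, wordProd_cons, List.zipWith_cons_cons, List.sum_cons]
    refine le_trans (sInf_wSet_mul hd0 (hne _ _) (hne _ _)) ?_
    have := sInf_wSet_prod hd0 hne l m (by simpa using h)
    linarith

lemma sInf_wSet_symm (hsymm : ∀ a b, d a b = d b a) (u v : FP G X) :
    sInf (wSet d P u v) = sInf (wSet d P v u) := by
  congr 1
  ext r
  constructor
  · rintro ⟨l, m, hlen, hl, hm, hpu, hpv, rfl⟩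
    exact ⟨m, l, hlen.symm, hm, hl, hpv, hpu, rho_symm hsymm l m⟩
  · rintro ⟨l, m, hlen, hl, hm, hpu, hpv, rfl⟩
    exact ⟨m, l, hlen.symm, hm, hl, hpv, hpu, rho_symm hsymm l m⟩

lemma sInf_wSet_triangle (hd0 : ∀ a b, 0 ≤ d a b) (hself : ∀ a, d a a = 0)
    (hPinv : ∀ s ∈ P, formalInv s ∈ P)
    (hne : ∀ u v : FP G X, (wSet d P u v).Nonempty) (u v w : FP G X) :
    sInf (wSet d P u w) ≤ sInf (wSet d P u v) + sInf (wSet d P v w) := by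
  have key : ∀ a ∈ wSet d P u v, ∀ b ∈ wSet d P v w, sInf (wSet d P u w) ≤ a + b := by
    rintro a ⟨p, q, hlen, hp, hq, hpu, hpv, rfl⟩ b ⟨r, s, hlen', hr, hs, hrv, hsw, rfl⟩
    have hinvmem : ∀ t ∈ q.reverse.map formalInv, t ∈ P := by
      intro t ht
      obtain ⟨t', ht', rfl⟩ := List.mem_map.1 ht
      exact hPinv t' (hq t' (List.mem_reverse.1 ht'))
    have hlen2 : (q.reverse.map formalInv).length = (q.reverse.map formalInv).length := rfl
    refine le_trans (csInf_le (wSet_bddBelow hd0 _ _)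
      (⟨p ++ (q.reverse.map formalInv ++ r), q ++ (q.reverse.map formalInv ++ s),
        by simp [hlen, hlen'], ?_, ?_, ?_, ?_, rfl⟩ :
        _ ∈ wSet d P u w)) ?_
    · simp only [List.mem_append]
      rintro t (h | h | h)
      exacts [hp t h, hinvmem t h, hr t h]
    · simp only [List.mem_append]
      rintro t (h | h | h)
      exacts [hq t h, hinvmem t h, hs t h]
    · rw [wordProd_append, wordProd_append, wordProd_invWord, hpu, hpv, hrv]
      group
    · rw [wordProd_append, wordProd_append, wordProd_invWord, hpv, hsw]
      group
    · rw [rho_append d _ _ hlen, rho_append d _ _ rfl, rho_self hself]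
      linarith [sum_zipWith_nonneg hd0 p q]
  rw [← sub_le_iff_le_add']
  refine le_csInf (hne v w) (fun b hb => ?_)
  rw [sub_le_iff_le_add, ← sub_le_iff_le_add']
  refine le_csInf (hne u v) (fun a ha => ?_)
  have := key a ha b hb
  linarith

lemma sInf_wSet_nonneg (hd0 : ∀ a b, 0 ≤ d a b) (u v : FP G X) :
    0 ≤ sInf (wSet d P u v) :=
  Real.sInf_nonneg (by rintro r ⟨l, m, -, -, -, -, -, rfl⟩; exact sum_zipWith_nonneg hd0 l m)

/-- Generic subadditivity over list products. -/
lemma subadd_prod {M : Type*} [Monoid M] (D : M → M → ℝ) (h1 : D 1 1 ≤ 0)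
    (hsub : ∀ u v u' v' : M, D (u * u') (v * v') ≤ D u v + D u' v') :
    ∀ l m : List M, l.length = m.length → D l.prod m.prod ≤ (List.zipWith D l m).sum
  | [], [], _ => by simpa using h1
  | [], _ :: _, h => by simp at h
  | _ :: _, [], h => by simp at h
  | a :: l, b :: m, h => by
    rw [List.prod_cons, List.prod_cons, List.zipWith_cons_cons, List.sum_cons]
    have h2 := subadd_prod D h1 hsub l m (by simpa using h)
    have h3 := hsub a b l.prod m.prod
    linarith

end WSet

end GraevAux
namespace GraevAux

section ColBound
variable {G X : Type*} [Group G] [Fintype X]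
variable {dG : G → G → ℝ} {A : Set G} {d' : (↥A ⊕ X) → (↥A ⊕ X) → ℝ}
variable (hG : IsMetricD dG) (hfg : IsFinGenMetric dG A) (h' : IsMetricD d')

set_option linter.unusedSectionVars false

include hG hfg h'

/-- Single column bound when both letters lie in the generating set. -/
lemma gamma_le_single {s t : Alphabet G X} (hs : s ∈ genSetS (X := X) A)
    (ht : t ∈ genSetS (X := X) A) :
    sInf (wSet (extD (amalgD dG A d')) (genSetS (X := X) A) (toFP s) (toFP t)) ≤
      extD (amalgD dG A d') s t := by
  have hmem : rho (extD (amalgD dG A d')) [s] [t] ∈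
      wSet (extD (amalgD dG A d')) (genSetS (X := X) A) (toFP s) (toFP t) := by
    refine ⟨[s], [t], rfl, by simpa using hs, by simpa using ht, ?_, ?_, rfl⟩
    · rw [wordProd_cons, wordProd_nil, mul_one]
    · rw [wordProd_cons, wordProd_nil, mul_one]
  have := csInf_le (wSet_bddBelow (dS_nonneg hG hfg h') _ _) hmem
  simpa [rho] using this

lemma rho_map_inl (l m : List G) :
    rho (extD (amalgD dG A d')) (l.map Sum.inl) (m.map (Sum.inl : G → Alphabet G X)) =
      (List.zipWith dG l m).sum := by
  unfold rho
  rw [List.zipWith_map]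
  rfl

/-- The key column estimate: `γ(s', t') ≤ d(s,t)` for all letters `s, t` of `S`. -/
lemma gamma_le_col (s t : Alphabet G X) :
    sInf (wSet (extD (amalgD dG A d')) (genSetS (X := X) A) (toFP s) (toFP t)) ≤
      extD (amalgD dG A d') s t := by
  have hbdd := wSet_bddBelow (P := genSetS (X := X) A) (dS_nonneg hG hfg h')
  -- case of two group letters
  have caseGG : ∀ g h : G,
      sInf (wSet (extD (amalgD dG A d')) (genSetS (X := X) A)
        (toFP (Sum.inl g)) (toFP (Sum.inl h))) ≤ extD (amalgD dG A d') (Sum.inl g) (Sum.inl h) := by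
    intro g h
    obtain ⟨l, m, hlen, hl, hm, hpl, hpm, hsum⟩ := fg_mem hfg g h
    have hmem : rho (extD (amalgD dG A d')) (l.map Sum.inl) (m.map Sum.inl) ∈
        wSet (extD (amalgD dG A d')) (genSetS (X := X) A)
          (toFP (Sum.inl g)) (toFP (Sum.inl h)) := by
      refine ⟨l.map Sum.inl, m.map Sum.inl, by simp [hlen], ?_, ?_, ?_, ?_, rfl⟩
      · intro s hs; obtain ⟨a, ha, rfl⟩ := List.mem_map.1 hs; exact hl a ha
      · intro s hs; obtain ⟨a, ha, rfl⟩ := List.mem_map.1 hs; exact hm a ha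
      · rw [wordProd_map_inl, hpl]; rfl
      · rw [wordProd_map_inl, hpm]; rfl
    have := csInf_le (hbdd _ _) hmem
    rw [rho_map_inl hG hfg h'] at this
    rw [dS_inl_inl, hsum]
    exact this
  -- case of a group letter against a letter of X
  have caseGX : ∀ (g : G) (x : X),
      sInf (wSet (extD (amalgD dG A d')) (genSetS (X := X) A)
        (toFP (Sum.inl g)) (toFP (Sum.inr (Sum.inl x)))) ≤
        extD (amalgD dG A d') (Sum.inl g) (Sum.inr (Sum.inl x)) := by
    intro g x
    obtain ⟨g₀, hg₀⟩ := (aset_least hG hfg h' g x).1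
    obtain ⟨p, q, hlen, hp, hq, hpp, hpq, hsum⟩ := fg_mem hfg ((g₀ : G)⁻¹ * g) 1
    have hmem : rho (extD (amalgD dG A d'))
        (Sum.inl (g₀ : G) :: p.map Sum.inl) (Sum.inr (Sum.inl x) :: q.map Sum.inl) ∈
        wSet (extD (amalgD dG A d')) (genSetS (X := X) A)
          (toFP (Sum.inl g)) (toFP (Sum.inr (Sum.inl x))) := by
      refine ⟨_, _, by simp [hlen], ?_, ?_, ?_, ?_, rfl⟩
      · rintro s hs
        rcases List.mem_cons.1 hs with rfl | hs
        · exact g₀.2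
        · obtain ⟨a, ha, rfl⟩ := List.mem_map.1 hs; exact hp a ha
      · rintro s hs
        rcases List.mem_cons.1 hs with rfl | hs
        · exact mem_genSet_inr _
        · obtain ⟨a, ha, rfl⟩ := List.mem_map.1 hs; exact hq a ha
      · rw [wordProd_cons, wordProd_map_inl, hpp]
        show Coprod.inl (g₀ : G) * Coprod.inl ((g₀ : G)⁻¹ * g) = _
        rw [← map_mul, mul_inv_cancel_left]
        rfl
      · rw [wordProd_cons, wordProd_map_inl, hpq]
        show toFP (Sum.inr (Sum.inl x)) * Coprod.inl (1 : G) = _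
        rw [map_one, mul_one]
    have hle := csInf_le (hbdd _ _) hmem
    have hrho : rho (extD (amalgD dG A d'))
        (Sum.inl (g₀ : G) :: p.map Sum.inl) (Sum.inr (Sum.inl x) :: q.map Sum.inl) =
        sInf (aset dG A d' (g₀ : G) x) + (List.zipWith dG p q).sum := by
      rw [rho_cons, rho_map_inl hG hfg h', dS_inl_x]
    have h1 : sInf (aset dG A d' (g₀ : G) x) ≤ d' (Sum.inr x) (Sum.inl g₀) := by
      have := aset_le hG hfg h' (g₀ : G) x g₀
      rw [dm_refl hG] at this
      linarith
    have h2 : (List.zipWith dG p q).sum = dG (g₀ : G) g := by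
      rw [← hsum]
      have h3 := dG_left_inv hG hfg (g₀ : G) ((g₀ : G)⁻¹ * g) 1
      rw [mul_inv_cancel_left, mul_one] at h3
      rw [← h3, hG.2.1]
    rw [dS_inl_x, hg₀]
    rw [hrho, h2] at hle
    linarith
  -- case of a group letter against a letter of X⁻¹
  have caseGXinv : ∀ (g : G) (x : X),
      sInf (wSet (extD (amalgD dG A d')) (genSetS (X := X) A)
        (toFP (Sum.inl g)) (toFP (Sum.inr (Sum.inr x)))) ≤
        extD (amalgD dG A d') (Sum.inl g) (Sum.inr (Sum.inr x)) := by
    intro g x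
    obtain ⟨g₀, hg₀⟩ := (aset_least hG hfg h' g⁻¹ x).1
    obtain ⟨p, q, hlen, hp, hq, hpp, hpq, hsum⟩ := fg_mem hfg (g * (g₀ : G)) 1
    have hmem : rho (extD (amalgD dG A d'))
        (p.map Sum.inl ++ [Sum.inl (g₀ : G)⁻¹]) (q.map Sum.inl ++ [Sum.inr (Sum.inr x)]) ∈
        wSet (extD (amalgD dG A d')) (genSetS (X := X) A)
          (toFP (Sum.inl g)) (toFP (Sum.inr (Sum.inr x))) := by
      refine ⟨_, _, by simp [hlen], ?_, ?_, ?_, ?_, rfl⟩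
      · rintro s hs
        rcases List.mem_append.1 hs with hs | hs
        · obtain ⟨a, ha, rfl⟩ := List.mem_map.1 hs; exact hp a ha
        · rw [List.mem_singleton.1 hs]; exact hfg.2.2.1 _ g₀.2
      · rintro s hs
        rcases List.mem_append.1 hs with hs | hs
        · obtain ⟨a, ha, rfl⟩ := List.mem_map.1 hs; exact hq a ha
        · rw [List.mem_singleton.1 hs]; exact mem_genSet_inr _
      · rw [wordProd_append, wordProd_map_inl, hpp]
        show Coprod.inl (g * (g₀ : G)) * wordProd [Sum.inl (g₀ : G)⁻¹] = _
        rw [wordProd_cons, wordProd_nil, mul_one]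
        show _ * Coprod.inl ((g₀ : G)⁻¹) = Coprod.inl g
        rw [← map_mul, mul_inv_cancel_right]
      · rw [wordProd_append, wordProd_map_inl, hpq, map_one, one_mul]
        rw [wordProd_cons, wordProd_nil, mul_one]
    have hle := csInf_le (hbdd _ _) hmem
    have hrho : rho (extD (amalgD dG A d'))
        (p.map Sum.inl ++ [Sum.inl (g₀ : G)⁻¹]) (q.map Sum.inl ++ [Sum.inr (Sum.inr x)]) =
        (List.zipWith dG p q).sum + sInf (aset dG A d' ((g₀ : G)⁻¹)⁻¹ x) := by
      rw [rho_append _ _ _ (by simp [hlen]), rho_map_inl hG hfg h', rho_cons, rho_nil,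
        dS_inl_xinv, add_zero]
    have h1 : sInf (aset dG A d' ((g₀ : G)⁻¹)⁻¹ x) ≤ d' (Sum.inr x) (Sum.inl g₀) := by
      have := aset_le hG hfg h' (((g₀ : G)⁻¹)⁻¹) x g₀
      rw [inv_inv, dm_refl hG] at this
      rw [inv_inv]
      linarith
    have h2 : (List.zipWith dG p q).sum = dG (g₀ : G) g⁻¹ := by
      rw [← hsum]
      have h3 := dG_right_inv hG hfg (g₀ : G)⁻¹ (g * (g₀ : G)) 1
      rw [mul_inv_cancel_right, one_mul] at h3
      have h4 := dG_inv_inv hG hfg g (g₀ : G)⁻¹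
      rw [inv_inv] at h4
      rw [← h3, ← h4, hG.2.1]
    rw [dS_inl_xinv, hg₀]
    rw [hrho, h2] at hle
    linarith
  -- now the case bash
  have hsymm := dS_symm (dG := dG) (A := A) (d' := d') hG hfg h'
  rcases s with g | x | x <;> rcases t with h | y | y
  · exact caseGG g h
  · exact caseGX g y
  · exact caseGXinv g y
  · rw [sInf_wSet_symm hsymm, hsymm]; exact caseGX h x
  · exact gamma_le_single hG hfg h' (mem_genSet_inr _) (mem_genSet_inr _)
  · exact gamma_le_single hG hfg h' (mem_genSet_inr _) (mem_genSet_inr _)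
  · rw [sInf_wSet_symm hsymm, hsymm]; exact caseGXinv h x
  · exact gamma_le_single hG hfg h' (mem_genSet_inr _) (mem_genSet_inr _)
  · exact gamma_le_single hG hfg h' (mem_genSet_inr _) (mem_genSet_inr _)

end ColBound

end GraevAux
namespace GraevAux

section Assemble
variable {G X : Type*} [Group G] [Fintype X]
variable {dG : G → G → ℝ} {A : Set G} {d' : (↥A ⊕ X) → (↥A ⊕ X) → ℝ}
variable (hG : IsMetricD dG) (hfg : IsFinGenMetric dG A) (h' : IsMetricD d')

set_option linter.unusedSectionVars false

include hfg in
lemma genSet_finite : (genSetS (X := X) A).Finite := by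
  refine Set.Finite.subset ((hfg.1.image Sum.inl).union
    ((Set.finite_univ (α := X ⊕ X)).image Sum.inr)) ?_
  rintro (g | t) hs
  · exact Or.inl ⟨g, hs, rfl⟩
  · exact Or.inr ⟨t, trivial, rfl⟩

include hfg in
lemma genSet_formalInv {s : Alphabet G X} (hs : s ∈ genSetS (X := X) A) :
    formalInv s ∈ genSetS (X := X) A := by
  rcases s with g | x | x
  · exact hfg.2.2.1 g hs
  · exact mem_genSet_inr _
  · exact mem_genSet_inr _

include hG hfg h'

/-- Part 2: the infimum in the definition of `γ` is attained. -/
lemma gamma_isLeast (u v : FP G X) :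
    IsLeast (wSet (extD (amalgD dG A d')) (genSetS (X := X) A) u v)
      (sInf (wSet (extD (amalgD dG A d')) (genSetS (X := X) A) u v)) := by
  have hd0 := dS_nonneg hG hfg h'
  refine isLeast_sInf_of_sums (D := Set.image2 (extD (amalgD dG A d'))
    (genSetS (X := X) A) (genSetS (X := X) A)) ?_ ?_
    (wSet_nonempty hfg subset_rfl u v) ?_
  · exact Set.Finite.image2 _ (genSet_finite hfg) (genSet_finite hfg)
  · rintro x ⟨a, -, b, -, rfl⟩
    exact hd0 a b
  · rintro r ⟨l, m, hlen, hl, hm, hpu, hpv, rfl⟩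
    refine ⟨List.zipWith (extD (amalgD dG A d')) l m, ?_, rfl⟩
    intro x hx
    obtain ⟨a, ha, b, hb, rfl⟩ := mem_zipWith hx
    exact ⟨a, hl a ha, b, hm b hb, rfl⟩

/-- Part 1: `γ = δ`. -/
lemma gamma_eq_delta (u v : FP G X) :
    gammaFG (extD (amalgD dG A d')) A u v = graevDelta (extD (amalgD dG A d')) u v := by
  have hd0 := dS_nonneg hG hfg h'
  have hne : ∀ u v : FP G X,
      (wSet (extD (amalgD dG A d')) (genSetS (X := X) A) u v).Nonempty :=
    fun u v => wSet_nonempty hfg subset_rfl u v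
  rw [gammaFG_eq_wSet, graevDelta_eq_wSet]
  refine le_antisymm ?_ ?_
  · -- γ ≤ δ
    refine le_csInf (wSet_nonempty hfg (Set.subset_univ _) u v) ?_
    rintro r ⟨l, m, hlen, -, -, hpu, hpv, rfl⟩
    rw [← hpu, ← hpv]
    refine le_trans (sInf_wSet_prod hd0 hne l m hlen) ?_
    exact sum_zipWith_le (fun a b => gamma_le_col hG hfg h' a b) l m
  · -- δ ≤ γ
    refine csInf_le_csInf (wSet_bddBelow hd0 u v) (hne u v) ?_
    rintro r ⟨l, m, hlen, hl, hm, hpu, hpv, rfl⟩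
    exact ⟨l, m, hlen, by simp, by simp, hpu, hpv, rfl⟩

lemma delta_le_d (s t : Alphabet G X) :
    graevDelta (extD (amalgD dG A d')) (toFP s) (toFP t) ≤ extD (amalgD dG A d') s t := by
  have hd0 := dS_nonneg hG hfg h'
  rw [graevDelta_eq_wSet]
  have hmem : rho (extD (amalgD dG A d')) [s] [t] ∈
      wSet (extD (amalgD dG A d')) Set.univ (toFP s) (toFP t) := by
    refine ⟨[s], [t], rfl, by simp, by simp, ?_, ?_, rfl⟩
    · rw [wordProd_cons, wordProd_nil, mul_one]
    · rw [wordProd_cons, wordProd_nil, mul_one]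
  have := csInf_le (wSet_bddBelow hd0 _ _) hmem
  simpa [rho] using this

lemma delta_refl (u : FP G X) : graevDelta (extD (amalgD dG A d')) u u = 0 := by
  have hd0 := dS_nonneg hG hfg h'
  rw [graevDelta_eq_wSet]
  refine le_antisymm ?_ (sInf_wSet_nonneg hd0 u u)
  obtain ⟨l, -, hpl⟩ := exists_word hfg u
  exact csInf_le (wSet_bddBelow hd0 u u)
    ⟨l, l, rfl, by simp, by simp, hpl, hpl, (rho_self (dS_self hG hfg h') l).symm⟩

lemma delta_subadd (u v u' v' : FP G X) :
    graevDelta (extD (amalgD dG A d')) (u * u') (v * v') ≤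
      graevDelta (extD (amalgD dG A d')) u v + graevDelta (extD (amalgD dG A d')) u' v' := by
  have hd0 := dS_nonneg hG hfg h'
  rw [graevDelta_eq_wSet, graevDelta_eq_wSet, graevDelta_eq_wSet]
  exact sInf_wSet_mul hd0 (wSet_nonempty hfg (Set.subset_univ _) u v)
    (wSet_nonempty hfg (Set.subset_univ _) u' v')

/-- Part 3: `δ` is a metric. -/
lemma delta_metric : IsMetricD (graevDelta (extD (amalgD dG A d'))) := by
  have hd0 := dS_nonneg hG hfg h'
  refine ⟨fun u v => ⟨fun h0 => ?_, fun h0 => h0 ▸ delta_refl hG hfg h' u⟩,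
    fun u v => ?_, fun u v w => ?_⟩
  · -- δ u v = 0 → u = v
    have h1 : gammaFG (extD (amalgD dG A d')) A u v = 0 := by
      rw [gamma_eq_delta hG hfg h', h0]
    have h2 := (gamma_isLeast hG hfg h' u v).1
    rw [gammaFG_eq_wSet] at h1
    rw [h1] at h2
    obtain ⟨l, m, hlen, hl, hm, hpu, hpv, hr⟩ := h2
    have hlm : l = m := by
      refine zipWith_eq_of_sum_eq_zero hd0 l m ?_ hlen hr.symm
      intro a ha b hb hab
      exact dS_pos_gen hG hfg h' (hl a ha) (hm b hb) hab
    rw [← hpu, ← hpv, hlm]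
  · -- symmetry
    rw [graevDelta_eq_wSet, graevDelta_eq_wSet]
    exact sInf_wSet_symm (dS_symm hG hfg h') u v
  · -- triangle
    rw [graevDelta_eq_wSet, graevDelta_eq_wSet, graevDelta_eq_wSet]
    exact sInf_wSet_triangle hd0 (dS_self hG hfg h') (fun s _ => Set.mem_univ _)
      (fun u v => wSet_nonempty hfg (Set.subset_univ _) u v) u v w

/-- Part 4: `δ` is finitely generated with generating set `toFP '' genSetS A`. -/
lemma delta_fingen :
    IsFinGenMetric (graevDelta (extD (amalgD dG A d'))) (toFP '' genSetS (X := X) A) := by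
  have hd0 := dS_nonneg hG hfg h'
  refine ⟨(genSet_finite hfg).image toFP, ⟨Sum.inl 1, hfg.2.1, map_one Coprod.inl⟩, ?_, ?_⟩
  · rintro g ⟨s, hs, rfl⟩
    exact ⟨formalInv s, genSet_formalInv hfg hs, toFP_formalInv s⟩
  · intro u v
    have hsub := subadd_prod (graevDelta (extD (amalgD dG A d')))
      (le_of_eq (delta_refl hG hfg h' 1)) (delta_subadd hG hfg h')
    constructor
    · -- membership: the infimum is attained
      obtain ⟨l, m, hlen, hl, hm, hpu, hpv, hval⟩ := (gamma_isLeast hG hfg h' u v).1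
      refine ⟨l.map toFP, m.map toFP, by simp [hlen], ?_, ?_, hpu, hpv, ?_⟩
      · intro x hx; obtain ⟨a, ha, rfl⟩ := List.mem_map.1 hx; exact ⟨a, hl a ha, rfl⟩
      · intro x hx; obtain ⟨a, ha, rfl⟩ := List.mem_map.1 hx; exact ⟨a, hm a ha, rfl⟩
      · rw [List.zipWith_map]
        refine le_antisymm ?_ ?_
        · -- δ u v ≤ Σ δ(toFP aᵢ, toFP bᵢ)
          have := hsub (l.map toFP) (m.map toFP) (by simp [hlen])
          rw [List.zipWith_map] at this
          calc graevDelta (extD (amalgD dG A d')) u v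
              = graevDelta (extD (amalgD dG A d')) (wordProd l) (wordProd m) := by
                rw [hpu, hpv]
            _ ≤ _ := this
        · -- Σ δ(toFP aᵢ, toFP bᵢ) ≤ δ u v
          have h1 : (List.zipWith (fun a b => graevDelta (extD (amalgD dG A d'))
              (toFP a) (toFP b)) l m).sum ≤ rho (extD (amalgD dG A d')) l m :=
            sum_zipWith_le (fun a b => delta_le_d hG hfg h' a b) l m
          have h2 : sInf (wSet (extD (amalgD dG A d')) (genSetS (X := X) A) u v) =
              graevDelta (extD (amalgD dG A d')) u v := by
            rw [← gammaFG_eq_wSet, gamma_eq_delta hG hfg h']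
          rw [← hval, h2] at h1
          exact h1
    · -- lower bound
      rintro r ⟨l, m, hlen, hl, hm, hpu, hpv, rfl⟩
      have := hsub l m hlen
      rwa [hpu, hpv] at this

end Assemble

end GraevAux
/-- In the finitely generated setting, the metric `γ` generated by the
values of `d` on pairs from `A_G ⊔ X ⊔ X⁻¹` coincides with the Graev metric `δ`, the
infimum in the definition of `γ` is attained, and `δ` is a finitely generated metric on
`G ∗ F(X)` with generating set `A_G ⊔ X ⊔ X⁻¹`. -/
theorem gamma_eq_graevDelta {G X : Type*} [Group G] [Fintype X]
    (dG : G → G → ℝ) (A : Set G) (dX : X → X → ℝ)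
    (hG : IsMetricD dG) (hfg : IsFinGenMetric dG A) (hX : IsMetricD dX)
    (d' : (↥A ⊕ X) → (↥A ⊕ X) → ℝ) (h' : IsMetricD d')
    (hextG : ∀ a b : A, d' (Sum.inl a) (Sum.inl b) = dG (a : G) (b : G))
    (hextX : ∀ x y : X, d' (Sum.inr x) (Sum.inr y) = dX x y) :
    (∀ u v : FP G X,
      gammaFG (extD (amalgD dG A d')) A u v = graevDelta (extD (amalgD dG A d')) u v) ∧
    (∀ u v : FP G X,
      IsLeast { r | ∃ l m : List (Alphabet G X), l.length = m.length ∧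
          (∀ s ∈ l, s ∈ genSetS (X := X) A) ∧ (∀ s ∈ m, s ∈ genSetS (X := X) A) ∧
          wordProd l = u ∧ wordProd m = v ∧ r = rho (extD (amalgD dG A d')) l m }
        (gammaFG (extD (amalgD dG A d')) A u v)) ∧
    IsMetricD (graevDelta (extD (amalgD dG A d'))) ∧
    IsFinGenMetric (graevDelta (extD (amalgD dG A d')))
      (toFP '' genSetS (X := X) A) :=
  ⟨fun u v => GraevAux.gamma_eq_delta hG hfg h' u v,
   fun u v => GraevAux.gamma_isLeast hG hfg h' u v,
   GraevAux.delta_metric hG hfg h',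
   GraevAux.delta_fingen hG hfg h'⟩
end

section
/- Let G be a group with a finitely generated metric d_G with generating set A_G, and let F = F(A_G \ {1}) be the free group on A_G \ {1} equipped with the Graev metric δ constructed over the pointed metric space (A_G \ {1}) ⊔ {1} with the metric inherited from d_G (i.e., the case G = {1} of the Graev construction, with unit 1 ∈ A_G as base point). Then the canonical surjective homomorphism π : F → G sending each generator a ∈ A_G \ {1} to a ∈ G is 1-Lipschitz, and for all g,h ∈ G one has d_G(g,h) = inf{ δ(u,v) : u,v ∈ F, π(u) = g, π(v) = h }; i.e., d_G is the factor metric of the Graev metric. -/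
open Monoid

/-- Canonical image of a letter of `{1} ⊔ Y ⊔ Y⁻¹` in the free group `F(Y)`. -/
def toFree {Y : Type*} : (Unit ⊕ (Y ⊕ Y)) → FreeGroup Y
  | Sum.inl _ => 1
  | Sum.inr (Sum.inl y) => FreeGroup.of y
  | Sum.inr (Sum.inr y) => (FreeGroup.of y)⁻¹

/-- The Graev metric on the free group `F(Y)` over a pointed space `Y ⊔ {1}`,
computed from the distance function `d` on the alphabet `{1} ⊔ Y ⊔ Y⁻¹`. -/
noncomputable def graevDeltaFree {Y : Type*}
    (d : (Unit ⊕ (Y ⊕ Y)) → (Unit ⊕ (Y ⊕ Y)) → ℝ) (u v : FreeGroup Y) : ℝ :=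
  sInf { r | ∃ w₁ w₂ : List (Unit ⊕ (Y ⊕ Y)), w₁.length = w₂.length ∧
    (w₁.map toFree).prod = u ∧ (w₂.map toFree).prod = v ∧ r = rho d w₁ w₂ }

/-- The non-unit generators `A \ {1}` of a group with a finitely generated metric. -/
abbrev GenType {G : Type*} [Group G] (A : Set G) := { a : G // a ∈ A ∧ a ≠ 1 }

/-- The distance function on the alphabet `{1} ⊔ (A \ {1}) ⊔ (A \ {1})⁻¹` inherited from
`d_G` on the pointed space `(A \ {1}) ⊔ {1}`, as in the Graev construction: inverse
letters are carried back by the formal-inverse isometry, and the distance from a positive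
letter to a negative letter passes through the base point `1`. -/
noncomputable def graevBaseD {G : Type*} [Group G] (dG : G → G → ℝ) (A : Set G) :
    (Unit ⊕ (GenType A ⊕ GenType A)) → (Unit ⊕ (GenType A ⊕ GenType A)) → ℝ
  | Sum.inl _, Sum.inl _ => dG 1 1
  | Sum.inl _, Sum.inr (Sum.inl y) => dG 1 (y : G)
  | Sum.inl _, Sum.inr (Sum.inr y) => dG 1 (y : G)
  | Sum.inr (Sum.inl y), Sum.inl _ => dG (y : G) 1
  | Sum.inr (Sum.inr y), Sum.inl _ => dG (y : G) 1
  | Sum.inr (Sum.inl y), Sum.inr (Sum.inl z) => dG (y : G) (z : G)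
  | Sum.inr (Sum.inr y), Sum.inr (Sum.inr z) => dG (y : G) (z : G)
  | Sum.inr (Sum.inl y), Sum.inr (Sum.inr z) => dG (y : G) 1 + dG 1 (z : G)
  | Sum.inr (Sum.inr y), Sum.inr (Sum.inl z) => dG (y : G) 1 + dG 1 (z : G)

section Aux

variable {G : Type*} [Group G] {dG : G → G → ℝ} {A : Set G}

private lemma dG_nonneg (hm : IsMetricD dG) (x y : G) : 0 ≤ dG x y := by
  have h1 := (hm.1 x x).2 rfl
  have h2 := hm.2.2 x y x
  have h3 := hm.2.1 y x
  linarith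

private lemma dG_mul_le (hfg : IsFinGenMetric dG A) (a b c e : G) :
    dG (a * b) (c * e) ≤ dG a c + dG b e := by
  obtain ⟨l₁, m₁, hlen₁, hlA₁, hmA₁, hp₁, hq₁, hs₁⟩ := (hfg.2.2.2 a c).1
  obtain ⟨l₂, m₂, hlen₂, hlA₂, hmA₂, hp₂, hq₂, hs₂⟩ := (hfg.2.2.2 b e).1
  refine (hfg.2.2.2 (a * b) (c * e)).2 ⟨l₁ ++ l₂, m₁ ++ m₂, by simp [hlen₁, hlen₂],
    ?_, ?_, by simp [hp₁, hp₂], by simp [hq₁, hq₂], ?_⟩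
  · intro x hx; rcases List.mem_append.1 hx with h | h
    exacts [hlA₁ x h, hlA₂ x h]
  · intro x hx; rcases List.mem_append.1 hx with h | h
    exacts [hmA₁ x h, hmA₂ x h]
  · rw [List.zipWith_append hlen₁, List.sum_append, hs₁, hs₂]

private lemma dG_biinv (hm : IsMetricD dG) (hfg : IsFinGenMetric dG A) :
    IsBiInvariant dG := by
  have key : ∀ g h x y : G, dG (g * x * h) (g * y * h) ≤ dG x y := by
    intro g h x y
    have h1 := dG_mul_le hfg (g * x) h (g * y) h
    have h2 := dG_mul_le hfg g x g y
    have hgg : dG g g = 0 := (hm.1 g g).2 rfl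
    have hhh : dG h h = 0 := (hm.1 h h).2 rfl
    linarith
  intro g h x y
  refine le_antisymm (key g h x y) ?_
  have h2 := key g⁻¹ h⁻¹ (g * x * h) (g * y * h)
  have e1 : g⁻¹ * (g * x * h) * h⁻¹ = x := by group
  have e2 : g⁻¹ * (g * y * h) * h⁻¹ = y := by group
  rwa [e1, e2] at h2

private lemma dG_inv (hm : IsMetricD dG) (hfg : IsFinGenMetric dG A) (x y : G) :
    dG x⁻¹ y⁻¹ = dG x y := by
  have hb := dG_biinv hm hfg y x x⁻¹ y⁻¹
  have e1 : y * x⁻¹ * x = y := by group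
  have e2 : y * y⁻¹ * x = x := by group
  rw [e1, e2] at hb
  rw [← hb, hm.2.1]

/-- Canonical image of a letter in `G`. -/
private def phi {G : Type*} [Group G] {A : Set G} :
    (Unit ⊕ (GenType A ⊕ GenType A)) → G
  | Sum.inl _ => 1
  | Sum.inr (Sum.inl y) => (y : G)
  | Sum.inr (Sum.inr y) => (y : G)⁻¹

private lemma phi_mem (hfg : IsFinGenMetric dG A)
    (s : Unit ⊕ (GenType A ⊕ GenType A)) : phi s ∈ A := by
  rcases s with _ | y | y
  · exact hfg.2.1
  · exact y.2.1
  · exact hfg.2.2.1 _ y.2.1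

private lemma lift_toFree (s : Unit ⊕ (GenType A ⊕ GenType A)) :
    FreeGroup.lift (fun y : GenType A => (y : G)) (toFree s) = phi s := by
  rcases s with _ | y | y <;> simp [toFree, phi]

private lemma lift_prod (w : List (Unit ⊕ (GenType A ⊕ GenType A))) :
    FreeGroup.lift (fun y : GenType A => (y : G)) ((w.map toFree).prod)
      = (w.map phi).prod := by
  rw [map_list_prod, List.map_map]
  congr 1
  exact List.map_congr_left fun s _ => lift_toFree s

private lemma letter_le (hm : IsMetricD dG) (hfg : IsFinGenMetric dG A)
    (s t : Unit ⊕ (GenType A ⊕ GenType A)) :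
    dG (phi s) (phi t) ≤ graevBaseD dG A s t := by
  have h1z : ∀ z : G, dG 1 z⁻¹ = dG 1 z := fun z => by
    have := dG_inv hm hfg 1 z; rwa [inv_one] at this
  have hz1 : ∀ z : G, dG z⁻¹ 1 = dG z 1 := fun z => by
    have := dG_inv hm hfg z 1; rwa [inv_one] at this
  rcases s with _ | y | y <;> rcases t with _ | z | z <;> simp only [phi, graevBaseD] <;>
    first
      | exact le_rfl
      | exact (h1z _).le
      | exact (hz1 _).le
      | exact (dG_inv hm hfg _ _).le
      | exact le_trans (hm.2.2 _ 1 _) (by rw [h1z])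
      | exact le_trans (hm.2.2 _ 1 _) (by rw [hz1])

private lemma sum_zipWith_le {α : Type*} {f g : α → α → ℝ} (h : ∀ s t, f s t ≤ g s t) :
    ∀ w₁ w₂ : List α, (List.zipWith f w₁ w₂).sum ≤ (List.zipWith g w₁ w₂).sum
  | [], _ => by simp
  | _ :: _, [] => by simp
  | a :: w₁, b :: w₂ => by
      simp only [List.zipWith_cons_cons, List.sum_cons]
      exact add_le_add (h a b) (sum_zipWith_le h w₁ w₂)

private lemma sum_zipWith_nonneg {α : Type*} {f : α → α → ℝ} (h : ∀ s t, 0 ≤ f s t) :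
    ∀ w₁ w₂ : List α, 0 ≤ (List.zipWith f w₁ w₂).sum
  | [], _ => by simp
  | _ :: _, [] => by simp
  | a :: w₁, b :: w₂ => by
      simp only [List.zipWith_cons_cons, List.sum_cons]
      exact add_nonneg (h a b) (sum_zipWith_nonneg h w₁ w₂)

private lemma zipWith_congr_mem {α : Type*} {f g : α → α → ℝ} :
    ∀ l m : List α, (∀ a ∈ l, ∀ b ∈ m, f a b = g a b) →
      List.zipWith f l m = List.zipWith g l m
  | [], _, _ => by simp
  | _ :: _, [], _ => by simp
  | a :: l, b :: m, h => by
      simp only [List.zipWith_cons_cons]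
      refine congrArg₂ _ (h a (by simp) b (by simp)) (zipWith_congr_mem l m ?_)
      intro x hx y hy
      exact h x (List.mem_cons_of_mem _ hx) y (List.mem_cons_of_mem _ hy)

private lemma base_nonneg (hm : IsMetricD dG)
    (s t : Unit ⊕ (GenType A ⊕ GenType A)) : 0 ≤ graevBaseD dG A s t := by
  rcases s with _ | y | y <;> rcases t with _ | z | z <;> simp only [graevBaseD] <;>
    first
      | exact dG_nonneg hm _ _
      | exact add_nonneg (dG_nonneg hm _ _) (dG_nonneg hm _ _)

private lemma key_lip (hm : IsMetricD dG) (hfg : IsFinGenMetric dG A)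
    (w₁ w₂ : List (Unit ⊕ (GenType A ⊕ GenType A))) (hlen : w₁.length = w₂.length) :
    dG ((w₁.map phi).prod) ((w₂.map phi).prod) ≤ rho (graevBaseD dG A) w₁ w₂ := by
  have h1 := (hfg.2.2.2 (w₁.map phi).prod (w₂.map phi).prod).2
    ⟨w₁.map phi, w₂.map phi, by simp [hlen],
      by rintro x hx; obtain ⟨s, _, rfl⟩ := List.mem_map.1 hx; exact phi_mem hfg s,
      by rintro x hx; obtain ⟨s, _, rfl⟩ := List.mem_map.1 hx; exact phi_mem hfg s,
      rfl, rfl, rfl⟩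
  refine h1.trans ?_
  rw [List.zipWith_map]
  exact sum_zipWith_le (letter_le hm hfg) w₁ w₂

private lemma exists_word (u : FreeGroup (GenType A)) :
    ∃ w : List (Unit ⊕ (GenType A ⊕ GenType A)), (w.map toFree).prod = u := by
  refine FreeGroup.induction_on u ⟨[], by simp⟩
    (fun x => ⟨[Sum.inr (Sum.inl x)], by simp [toFree]⟩)
    (fun x _ => ⟨[Sum.inr (Sum.inr x)], by simp [toFree]⟩) ?_
  rintro x y ⟨w₁, h₁⟩ ⟨w₂, h₂⟩
  exact ⟨w₁ ++ w₂, by simp [h₁, h₂]⟩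

open Classical in
/-- Lift of a generator back to the alphabet. -/
private noncomputable def psi (A : Set G) (a : G) : Unit ⊕ (GenType A ⊕ GenType A) :=
  if h : a ∈ A ∧ a ≠ 1 then Sum.inr (Sum.inl ⟨a, h⟩) else Sum.inl ()

private lemma phi_psi {a : G} (ha : a ∈ A) : phi (psi A a) = a := by
  by_cases h1 : a = 1
  · rw [psi, dif_neg (by simp [h1])]; simp [phi, h1]
  · rw [psi, dif_pos ⟨ha, h1⟩]; rfl

private lemma base_psi {a b : G} (ha : a ∈ A) (hb : b ∈ A) :
    graevBaseD dG A (psi A a) (psi A b) = dG a b := by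
  by_cases h1 : a = 1 <;> by_cases h2 : b = 1
  · rw [psi, psi, dif_neg (by simp [h1]), dif_neg (by simp [h2])]
    simp [graevBaseD, h1, h2]
  · rw [psi, psi, dif_neg (by simp [h1]), dif_pos ⟨hb, h2⟩]
    simp [graevBaseD, h1]
  · rw [psi, psi, dif_pos ⟨ha, h1⟩, dif_neg (by simp [h2])]
    simp [graevBaseD, h2]
  · rw [psi, psi, dif_pos ⟨ha, h1⟩, dif_pos ⟨hb, h2⟩]
    rfl

end Aux

/-- If `d_G` is a finitely generated metric on `G` with generating set
`A`, then the canonical surjection `π : F(A \ {1}) → G` from the free group with the Graev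
metric over `(A \ {1}) ⊔ {1}` is `1`-Lipschitz, and `d_G` is the factor metric of the
Graev metric. -/
theorem finGenMetric_factor_of_graev {G : Type*} [Group G] (dG : G → G → ℝ) (A : Set G)
    (hm : IsMetricD dG) (hfg : IsFinGenMetric dG A) :
    Function.Surjective (FreeGroup.lift (fun y : GenType A => (y : G))) ∧
    (∀ u v : FreeGroup (GenType A),
      dG (FreeGroup.lift (fun y : GenType A => (y : G)) u)
         (FreeGroup.lift (fun y : GenType A => (y : G)) v) ≤
        graevDeltaFree (graevBaseD dG A) u v) ∧
    (∀ g h : G, dG g h =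
      sInf { r | ∃ u v : FreeGroup (GenType A),
        FreeGroup.lift (fun y : GenType A => (y : G)) u = g ∧
        FreeGroup.lift (fun y : GenType A => (y : G)) v = h ∧
        r = graevDeltaFree (graevBaseD dG A) u v }) := by
  have hbdd : ∀ u v : FreeGroup (GenType A),
      BddBelow { r | ∃ w₁ w₂ : List (Unit ⊕ (GenType A ⊕ GenType A)),
        w₁.length = w₂.length ∧ (w₁.map toFree).prod = u ∧ (w₂.map toFree).prod = v ∧
        r = rho (graevBaseD dG A) w₁ w₂ } := by
    rintro u v
    refine ⟨0, ?_⟩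
    rintro r ⟨w₁, w₂, -, -, -, rfl⟩
    exact sum_zipWith_nonneg (base_nonneg hm) w₁ w₂
  have hdelta_nonneg : ∀ u v : FreeGroup (GenType A),
      0 ≤ graevDeltaFree (graevBaseD dG A) u v := by
    intro u v
    refine Real.sInf_nonneg ?_
    rintro r ⟨w₁, w₂, -, -, -, rfl⟩
    exact sum_zipWith_nonneg (base_nonneg hm) w₁ w₂
  have surj : Function.Surjective (FreeGroup.lift (fun y : GenType A => (y : G))) := by
    intro g
    obtain ⟨l, m, -, hlA, -, hpl, -, -⟩ := (hfg.2.2.2 g g).1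
    have hmem : l.prod ∈ (FreeGroup.lift (fun y : GenType A => (y : G))).range := by
      apply Subgroup.list_prod_mem
      intro x hx
      by_cases h1 : x = 1
      · subst h1; exact one_mem _
      · exact ⟨FreeGroup.of ⟨x, hlA x hx, h1⟩, by simp⟩
    rw [hpl] at hmem
    exact hmem
  have lip : ∀ u v : FreeGroup (GenType A),
      dG (FreeGroup.lift (fun y : GenType A => (y : G)) u)
         (FreeGroup.lift (fun y : GenType A => (y : G)) v) ≤
        graevDeltaFree (graevBaseD dG A) u v := by
    intro u v
    refine le_csInf ?_ ?_
    · obtain ⟨w₁, h₁⟩ := exists_word u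
      obtain ⟨w₂, h₂⟩ := exists_word v
      refine ⟨_, w₁ ++ List.replicate (max w₁.length w₂.length - w₁.length) (Sum.inl ()),
        w₂ ++ List.replicate (max w₁.length w₂.length - w₂.length) (Sum.inl ()),
        ?_, ?_, ?_, rfl⟩
      · simp only [List.length_append, List.length_replicate]
        omega
      · simp [h₁, List.map_replicate, toFree]
      · simp [h₂, List.map_replicate, toFree]
    · rintro r ⟨w₁, w₂, hlen, rfl, rfl, rfl⟩
      rw [lift_prod, lift_prod]
      exact key_lip hm hfg w₁ w₂ hlen
  refine ⟨surj, lip, ?_⟩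
  intro g h
  refine le_antisymm (le_csInf ?_ ?_) ?_
  · obtain ⟨u, hu⟩ := surj g
    obtain ⟨v, hv⟩ := surj h
    exact ⟨_, u, v, hu, hv, rfl⟩
  · rintro r ⟨u, v, hu, hv, rfl⟩
    have heq : dG g h = dG (FreeGroup.lift (fun y : GenType A => (y : G)) u)
        (FreeGroup.lift (fun y : GenType A => (y : G)) v) := by rw [hu, hv]
    rw [heq]
    exact lip u v
  · obtain ⟨l, m, hlen, hlA, hmA, hpl, hpm, hsum⟩ := (hfg.2.2.2 g h).1
    set u : FreeGroup (GenType A) := ((l.map (psi A)).map toFree).prod with hu_def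
    set v : FreeGroup (GenType A) := ((m.map (psi A)).map toFree).prod with hv_def
    have hmapphi : ∀ (l' : List G), (∀ x ∈ l', x ∈ A) →
        (l'.map (psi A)).map phi = l' := by
      intro l' hl'
      rw [List.map_map]
      refine (List.map_congr_left fun a ha => phi_psi (hl' a ha)).trans l'.map_id
    have hu : FreeGroup.lift (fun y : GenType A => (y : G)) u = g := by
      rw [hu_def, lift_prod, hmapphi l hlA, hpl]
    have hv : FreeGroup.lift (fun y : GenType A => (y : G)) v = h := by
      rw [hv_def, lift_prod, hmapphi m hmA, hpm]
    have hduv : graevDeltaFree (graevBaseD dG A) u v ≤ dG g h := by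
      refine csInf_le (hbdd u v) ⟨l.map (psi A), m.map (psi A), by simp [hlen], rfl, rfl, ?_⟩
      rw [hsum]
      unfold rho
      rw [List.zipWith_map]
      exact congrArg List.sum (zipWith_congr_mem l m (fun a ha b hb =>
        base_psi (hlA a ha) (hmA b hb))).symm
    refine le_trans (csInf_le ?_ ⟨u, v, hu, hv, rfl⟩) hduv
    refine ⟨0, ?_⟩
    rintro r ⟨u', v', -, -, rfl⟩
    exact hdelta_nonneg u' v'
end
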